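/- arXiv:2301.11449 — 4 statements merged into one kernel-verified Lean document; each statement's English description precedes it below -/
import Mathlib

section
/- If τ₁ and τ₂ are tubes of a finite poset P that are neither nested nor disjoint, then the convex hull conv(τ₁ ∪ τ₂) is convex and connected in the Hasse diagram (i.e., is a tube). -/
open Finset

section Defs
variable {α : Type*} [Fintype α] [PartialOrder α] [DecidableEq α]

/-- `τ` is connected as an induced subgraph of the Hasse diagram of the poset. -/
def IsConnectedIn (τ : Finset α) : Prop :=
  ∀ a ∈ τ, ∀ b ∈ τ,
    Relation.ReflTransGen (fun x y => x ∈ τ ∧ y ∈ τ ∧ (x ⋖ y ∨ y ⋖ x)) a b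

/-- `τ` is (order-)convex. -/
def IsConvexIn (τ : Finset α) : Prop :=
  ∀ a ∈ τ, ∀ c ∈ τ, ∀ b, a ≤ b → b ≤ c → b ∈ τ

/-- A tube: connected, convex, of size at least 2. -/
def IsTube (τ : Finset α) : Prop :=
  IsConnectedIn τ ∧ IsConvexIn τ ∧ 2 ≤ τ.card

/-- A proper tube additionally has at most `|P| - 1` elements. -/
def IsProperTube (τ : Finset α) : Prop :=
  IsTube τ ∧ τ.card ≤ Fintype.card α - 1

open Classical in
/-- `α_τ(p) = Σ_{i ⋖ j, i,j ∈ τ} (p j - p i)`, over covering relations inside `τ`. -/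
noncomputable def alphaF (τ : Finset α) (p : α → ℝ) : ℝ :=
  ∑ i ∈ τ, ∑ j ∈ τ, if i ⋖ j then p j - p i else 0

/-- `diam_S(p) = max_{i,j ∈ S} |p i - p j|`. -/
noncomputable def diamF (S : Finset α) (p : α → ℝ) : ℝ :=
  if h : (S ×ˢ S).Nonempty then (S ×ˢ S).sup' h fun ij => |p ij.1 - p ij.2| else 0

open Classical in
/-- `conv S = {b : ∃ a c ∈ S, a ≤ b ≤ c}`. -/
noncomputable def convF (S : Finset α) : Finset α :=
  univ.filter fun b => ∃ a ∈ S, ∃ c ∈ S, a ≤ b ∧ b ≤ c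

/-- The relation `σ ≺ τ` on disjoint tubes of a tubing. -/
def TubingRel (T : Finset (Finset α)) (σ τ : Finset α) : Prop :=
  σ ∈ T ∧ τ ∈ T ∧ (∀ x ∈ σ, x ∉ τ) ∧ ∃ a ∈ σ, ∃ b ∈ τ, a < b

/-- A proper tubing: proper tubes, pairwise nested or disjoint, with acyclic `≺`. -/
def IsProperTubing (T : Finset (Finset α)) : Prop :=
  (∀ τ ∈ T, IsProperTube τ) ∧
  (∀ σ ∈ T, ∀ τ ∈ T, σ ⊆ τ ∨ τ ⊆ σ ∨ ∀ x ∈ σ, x ∉ τ) ∧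
  ∀ τ ∈ T, ¬ Relation.TransGen (TubingRel T) τ τ

/-- A maximal proper tubing. -/
def IsMaximalTubing (T : Finset (Finset α)) : Prop :=
  IsProperTubing T ∧ ∀ T', IsProperTubing T' → T ⊆ T' → T = T'

end Defs


section Aux
variable {α : Type*} [Fintype α] [PartialOrder α] [DecidableEq α]

lemma mem_convF {S : Finset α} {b : α} :
    b ∈ convF S ↔ ∃ a ∈ S, ∃ c ∈ S, a ≤ b ∧ b ≤ c := by
  classical
  simp [convF]

lemma subset_convF {S : Finset α} : S ⊆ convF S := by
  intro a ha
  exact mem_convF.mpr ⟨a, ha, a, ha, le_rfl, le_rfl⟩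

lemma reflTransGen_mono_tube {T T' : Finset α} (h : T ⊆ T') {a b : α}
    (hp : Relation.ReflTransGen (fun x y => x ∈ T ∧ y ∈ T ∧ (x ⋖ y ∨ y ⋖ x)) a b) :
    Relation.ReflTransGen (fun x y => x ∈ T' ∧ y ∈ T' ∧ (x ⋖ y ∨ y ⋖ x)) a b :=
  Relation.ReflTransGen.mono (by rintro _ _ ⟨hx, hy, hc⟩; exact ⟨h hx, h hy, hc⟩) _ _ hp

lemma path_of_le {T : Finset α} (hconv : IsConvexIn T) {a b : α}
    (ha : a ∈ T) (hb : b ∈ T) (hab : a ≤ b) :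
    Relation.ReflTransGen (fun x y => x ∈ T ∧ y ∈ T ∧ (x ⋖ y ∨ y ⋖ x)) a b := by
  classical
  rcases eq_or_lt_of_le hab with rfl | hlt
  · exact .refl
  haveI : LocallyFiniteOrder α := Fintype.toLocallyFiniteOrder
  have htg : Relation.TransGen (· ⋖ ·) a b := transGen_covBy_of_lt hlt
  suffices H : ∀ c : α, Relation.TransGen (· ⋖ ·) a c → c ≤ b →
      Relation.ReflTransGen (fun x y => x ∈ T ∧ y ∈ T ∧ (x ⋖ y ∨ y ⋖ x)) a c from
    H b htg le_rfl
  intro c h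
  induction h with
  | single h =>
    intro hcb
    exact Relation.ReflTransGen.single
      ⟨ha, hconv a ha b hb _ h.le hcb, Or.inl h⟩
  | tail h1 h2 ih =>
    rename_i m c
    intro hcb
    have ham : a ≤ m := (lt_iff_transGen_covBy.mpr h1).le
    exact Relation.ReflTransGen.tail (ih (h2.le.trans hcb))
      ⟨hconv a ha b hb m ham (h2.le.trans hcb),
       hconv a ha b hb c (le_of_lt (lt_of_le_of_lt ham h2.lt)) hcb, Or.inl h2⟩

end Aux

/-- if tubes `τ₁, τ₂` are neither nested nor disjoint, then
`conv(τ₁ ∪ τ₂)` is a tube (convex and connected in the Hasse diagram). -/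
theorem conv_union_isTube {α : Type*} [Fintype α] [PartialOrder α] [DecidableEq α]
    (τ₁ τ₂ : Finset α) (h1 : IsTube τ₁) (h2 : IsTube τ₂)
    (hnest : ¬ τ₁ ⊆ τ₂ ∧ ¬ τ₂ ⊆ τ₁) (hdisj : (τ₁ ∩ τ₂).Nonempty) :
    IsTube (convF (τ₁ ∪ τ₂)) := by
  classical
  set S := τ₁ ∪ τ₂ with hS
  set C := convF S with hC
  have hconvC : IsConvexIn C := by
    intro x hx z hz y hxy hyz
    obtain ⟨a, ha, c, hc, hax, _⟩ := mem_convF.mp hx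
    obtain ⟨a', _, c', hc', _, hzc'⟩ := mem_convF.mp hz
    exact mem_convF.mpr ⟨a, ha, c', hc', hax.trans hxy, hyz.trans hzc'⟩
  have hSC : S ⊆ C := subset_convF
  have hτ₁C : τ₁ ⊆ C := fun x hx => hSC (mem_union_left _ hx)
  have hτ₂C : τ₂ ⊆ C := fun x hx => hSC (mem_union_right _ hx)
  obtain ⟨w, hw⟩ := hdisj
  have hw1 : w ∈ τ₁ := (mem_inter.mp hw).1
  have hw2 : w ∈ τ₂ := (mem_inter.mp hw).2
  -- every element of S is connected to w within C
  have hSw : ∀ s ∈ S,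
      Relation.ReflTransGen (fun x y => x ∈ C ∧ y ∈ C ∧ (x ⋖ y ∨ y ⋖ x)) s w := by
    intro s hs
    rcases mem_union.mp hs with hs1 | hs2
    · exact reflTransGen_mono_tube hτ₁C (h1.1 s hs1 w hw1)
    · exact reflTransGen_mono_tube hτ₂C (h2.1 s hs2 w hw2)
  -- every element of C is connected to w within C
  have hCw : ∀ b ∈ C,
      Relation.ReflTransGen (fun x y => x ∈ C ∧ y ∈ C ∧ (x ⋖ y ∨ y ⋖ x)) b w := by
    intro b hb
    obtain ⟨a, ha, c, hc, hab, _⟩ := mem_convF.mp hb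
    have hpath : Relation.ReflTransGen (fun x y => x ∈ C ∧ y ∈ C ∧ (x ⋖ y ∨ y ⋖ x)) a b :=
      path_of_le hconvC (hSC ha) hb hab
    exact (Relation.ReflTransGen.mono (by rintro x y ⟨hx, hy, hcv⟩; exact ⟨hy, hx, hcv.symm⟩) _ _ (Relation.reflTransGen_swap.mpr hpath)).trans (hSw a ha)
  refine ⟨?_, hconvC, ?_⟩
  · intro a ha b hb
    exact (hCw a ha).trans
      (Relation.ReflTransGen.mono (by rintro x y ⟨hx, hy, hcv⟩; exact ⟨hy, hx, hcv.symm⟩) _ _ (Relation.reflTransGen_swap.mpr (hCw b hb)))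
  · exact le_trans h1.2.2 (card_le_card hτ₁C)
end

section
/- Let P be a finite poset with n elements and τ₁, …, τ_k pairwise disjoint tubes forming a cycle τ₁ ≺ τ₂ ≺ ⋯ ≺ τ_k ≺ τ₁ (for each i there exist x_i ∈ τ_i, y_{i+1} ∈ τ_{i+1 mod k} with x_i < y_{i+1}). If p : P → ℝ is order-preserving and diam_{τ_i}(p) ≤ D for all i, then for any elements z ∈ τ_i and z' ∈ τ_j, |p_z − p_{z'}| ≤ 2(k+1)·D + 2D. -/
open Finset

/-- pairwise disjoint tubes forming a cycle `τ₁ ≺ ⋯ ≺ τ_k ≺ τ₁`,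
with each `diam_{τ_i}(p) ≤ D`, force all values of `p` on `∪ τ_i` to be within
`2(k+1)·D + 2D` of each other. -/
theorem incompatible_case_two {α : Type*} [Fintype α] [PartialOrder α] [DecidableEq α]
    {k : ℕ} [NeZero k] (τ : Fin k → Finset α) (htube : ∀ i, IsTube (τ i))
    (hdisj : ∀ i j, i ≠ j → ∀ x ∈ τ i, x ∉ τ j)
    (x y : Fin k → α) (hx : ∀ i, x i ∈ τ i) (hy : ∀ i, y i ∈ τ i)
    (hcyc : ∀ i : Fin k, x i < y (i + 1))
    (p : α → ℝ) (hp : Monotone p) (D : ℝ) (hD : ∀ i, diamF (τ i) p ≤ D)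
    (i j : Fin k) (z z' : α) (hz : z ∈ τ i) (hz' : z' ∈ τ j) :
    |p z - p z'| ≤ 2 * (k + 1) * D + 2 * D := by
  have hne : ∀ i : Fin k, (τ i).Nonempty := fun i =>
    Finset.card_pos.mp (by have := (htube i).2.2; omega)
  have hdiam : ∀ (i : Fin k), ∀ a ∈ τ i, ∀ b ∈ τ i, |p a - p b| ≤ D := by
    intro i a ha b hb
    refine le_trans ?_ (hD i)
    unfold diamF
    have hab : (a, b) ∈ τ i ×ˢ τ i := Finset.mk_mem_product ha hb
    rw [dif_pos ⟨_, hab⟩]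
    exact Finset.le_sup' (fun ij => |p ij.1 - p ij.2|) hab
  have hD0 : 0 ≤ D := by
    obtain ⟨a, ha⟩ := hne i
    simpa using hdiam i a ha a ha
  have step : ∀ i : Fin k, p (x i) - D ≤ p (x (i + 1)) := by
    intro i
    have h1 : p (x i) ≤ p (y (i + 1)) := hp (hcyc i).le
    have h2 := abs_le.mp (hdiam (i + 1) (y (i + 1)) (hy _) (x (i + 1)) (hx _))
    linarith [h2.1]
  open Fin.NatCast in
  have main : ∀ (m : ℕ) (i : Fin k), p (x i) - m * D ≤ p (x (i + m)) := by
    intro m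
    induction m with
    | zero => intro i; simp
    | succ n ih =>
      intro i
      have h1 := ih i
      have h2 := step (i + n)
      have heq : (i + (n : Fin k)) + 1 = i + ((n + 1 : ℕ) : Fin k) := by
        push_cast; abel
      rw [heq] at h2
      push_cast at h2 ⊢
      linarith
  open Fin.NatCast in
  have key : ∀ i j : Fin k, p (x i) - p (x j) ≤ k * D := by
    intro i j
    have h := main (j - i).val i
    have hji : i + (((j - i).val : ℕ) : Fin k) = j := by
      rw [Fin.cast_val_eq_self]; abel
    rw [hji] at h
    have hle : ((j - i).val : ℝ) ≤ k := by exact_mod_cast (j - i).is_lt.le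
    nlinarith
  have a1 := abs_le.mp (hdiam i z hz (x i) (hx i))
  have a2 := abs_le.mp (hdiam j z' hz' (x j) (hx j))
  have k1 := key i j
  have k2 := key j i
  have hk0 : (0 : ℝ) ≤ k := Nat.cast_nonneg k
  rw [abs_le]
  constructor <;> nlinarith
end

section
/- Let P be a finite connected poset, T a maximal proper tubing of P. Then the intersection of the hyperplanes H_τ = {p ∈ ℝ^P_{Σ=0} : α_τ(p) = n^{2|τ|}} over all τ ∈ T ∪ {P} is a single point. -/
open Finset

set_option linter.unusedSectionVars false
namespace VtxAux
open Relation List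

namespace List
variable {β : Type*} {r : β → β → Prop}

@[simp] theorem chain_cons {a b : β} {l : _root_.List β} :
    _root_.List.Chain r a (b :: l) ↔ r a b ∧ _root_.List.Chain r b l :=
  _root_.List.isChain_cons_cons

@[simp] theorem chain_singleton {a b : β} : _root_.List.Chain r a [b] ↔ r a b := by
  rw [chain_cons]; simp [_root_.List.Chain]

@[simp] theorem chain_nil {a : β} : _root_.List.Chain r a [] :=
  _root_.List.IsChain.singleton a

theorem chain_split {a b : β} {l₁ l₂ : _root_.List β} :
    _root_.List.Chain r a (l₁ ++ b :: l₂) ↔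
      _root_.List.Chain r a (l₁ ++ [b]) ∧ _root_.List.Chain r b l₂ := by
  induction l₁ generalizing a with
  | nil => simp
  | cons c l ih => simp [ih, and_assoc]

theorem length_eq_zero {l : _root_.List β} : l.length = 0 ↔ l = [] :=
  _root_.List.length_eq_zero_iff

end List

section Generic
variable {β : Type*} {r : β → β → Prop}

lemma chain_transGen {a b : β} : ∀ {l : List β}, List.Chain r a (l ++ [b]) → TransGen r a b := by
  intro l
  induction l generalizing a with
  | nil => intro h; simp only [List.nil_append, List.chain_singleton] at h; exact .single h
  | cons c l ih =>
    intro h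
    rw [List.cons_append, List.chain_cons] at h
    exact (ih h.2).head h.1

lemma chain_rtg {a b : β} {l : List β} (h : List.Chain r a (l ++ [b])) : ReflTransGen r a b :=
  (chain_transGen h).to_reflTransGen

lemma transGen_chain {a b : β} (h : TransGen r a b) : ∃ l, List.Chain r a (l ++ [b]) := by
  induction h with
  | single h => exact ⟨[], by simpa using h⟩
  | @tail b c _ h ih =>
    obtain ⟨l, hl⟩ := ih
    refine ⟨l ++ [b], ?_⟩
    have he : l ++ [b] ++ [c] = l ++ b :: [c] := by simp
    rw [he, List.chain_split]
    exact ⟨hl, by simpa using h⟩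

lemma chain_penult {a b : β} : ∀ {l : List β}, List.Chain r a (l ++ [b]) →
    ∃ w, (w = a ∨ w ∈ l) ∧ r w b := by
  intro l
  induction l generalizing a with
  | nil => intro h; exact ⟨a, Or.inl rfl, by simpa using h⟩
  | cons c l ih =>
    intro h
    rw [List.cons_append, List.chain_cons] at h
    obtain ⟨w, hw, hr⟩ := ih h.2
    exact ⟨w, Or.inr (by rcases hw with h' | h' <;> simp [h']), hr⟩

lemma chain_replace_last {a b c : β} (hbc : ∀ w, r w b → r w c) :
    ∀ {l : List β}, List.Chain r a (l ++ [b]) → List.Chain r a (l ++ [c]) := by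
  intro l
  induction l generalizing a with
  | nil => intro h; simp only [List.nil_append, List.chain_singleton] at h ⊢; exact hbc _ h
  | cons d l ih =>
    intro h
    rw [List.cons_append, List.chain_cons] at h ⊢
    exact ⟨h.1, ih h.2⟩

lemma rtg_symm (hs : ∀ x y, r x y → r y x) {a b : β} (h : ReflTransGen r a b) :
    ReflTransGen r b a :=
  by haveI : Std.Symm r := ⟨fun a b h => hs a b h⟩; exact Std.Symm.symm _ _ h

end Generic

section Poset
variable {α : Type*} [Fintype α] [PartialOrder α] [DecidableEq α]

open Classical in
private lemma covChain_aux : ∀ (k : ℕ) (a b : α),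
    (Finset.univ.filter fun z => a < z ∧ z < b).card ≤ k → a < b →
    ∃ l, List.Chain (· ⋖ ·) a (l ++ [b]) ∧ ∀ x ∈ l, a < x ∧ x < b := by
  intro k
  induction k with
  | zero =>
    intro a b hcard hab
    refine ⟨[], ?_, by simp⟩
    simp only [List.nil_append, List.chain_singleton]
    constructor
    · exact hab
    · intro c hac hcb
      have : c ∈ Finset.univ.filter fun z => a < z ∧ z < b := by
        simp [hac, hcb]
      have := Finset.card_pos.2 ⟨c, this⟩
      omega
  | succ k ih =>
    intro a b hcard hab
    by_cases hcov : a ⋖ b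
    · exact ⟨[], by simpa using hcov, by simp⟩
    · obtain ⟨c, hac, hcb⟩ := (not_covBy_iff hab).mp hcov
      have hsub1 : (Finset.univ.filter fun z => a < z ∧ z < c) ⊂
          (Finset.univ.filter fun z => a < z ∧ z < b) := by
        constructor
        · intro z hz
          simp only [Finset.mem_filter] at hz ⊢
          exact ⟨hz.1, hz.2.1, hz.2.2.trans hcb⟩
        · intro hsub
          have : c ∈ (Finset.univ.filter fun z => a < z ∧ z < c) := hsub (by simp [hac, hcb])
          simp at this
      have hsub2 : (Finset.univ.filter fun z => c < z ∧ z < b) ⊂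
          (Finset.univ.filter fun z => a < z ∧ z < b) := by
        constructor
        · intro z hz
          simp only [Finset.mem_filter] at hz ⊢
          exact ⟨hz.1, hac.trans hz.2.1, hz.2.2⟩
        · intro hsub
          have : c ∈ (Finset.univ.filter fun z => c < z ∧ z < b) := hsub (by simp [hac, hcb])
          simp at this
      have h1 := Finset.card_lt_card hsub1
      have h2 := Finset.card_lt_card hsub2
      obtain ⟨l1, hl1, hm1⟩ := ih a c (by omega) hac
      obtain ⟨l2, hl2, hm2⟩ := ih c b (by omega) hcb
      refine ⟨l1 ++ c :: l2, ?_, ?_⟩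
      · have : l1 ++ c :: l2 ++ [b] = l1 ++ c :: (l2 ++ [b]) := by simp
        rw [this, List.chain_split]
        exact ⟨hl1, by
          rcases (List.chain_split (l₁ := l1) (l₂ := [])).mp (by simpa using hl1) with ⟨_, _⟩
          exact hl2⟩
      · intro x hx
        rcases List.mem_append.mp hx with h | h
        · exact ⟨(hm1 x h).1, (hm1 x h).2.trans hcb⟩
        · rcases List.mem_cons.mp h with h | h
          · subst h; exact ⟨hac, hcb⟩
          · exact ⟨hac.trans (hm2 x h).1, (hm2 x h).2⟩

lemma exists_covChain {a b : α} (hab : a < b) :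
    ∃ l, List.Chain (· ⋖ ·) a (l ++ [b]) ∧ ∀ x ∈ l, a < x ∧ x < b := by
  classical
  exact covChain_aux _ a b le_rfl hab

end Poset

section Tubing
variable {α : Type*} [Fintype α] [PartialOrder α] [DecidableEq α]
variable (T : Finset (Finset α))

def IsChildT (τ ρ : Finset α) : Prop :=
  ρ ∈ T ∧ ρ ⊂ τ ∧ ∀ ρ' ∈ T, ρ' ⊂ τ → ρ ⊆ ρ' → ρ = ρ'

def IsBlockT (τ B : Finset α) : Prop :=
  IsChildT T τ B ∨ ∃ x ∈ τ, B = {x} ∧ ∀ ρ, IsChildT T τ ρ → x ∉ ρ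

def RelBT (τ B C : Finset α) : Prop :=
  IsBlockT T τ B ∧ IsBlockT T τ C ∧ B ≠ C ∧ ∃ a ∈ B, ∃ c ∈ C, a < c

def IsNodeT (τ : Finset α) : Prop := τ = Finset.univ ∨ τ ∈ T

structure Ctx : Prop where
  prop : ∀ τ ∈ T, IsProperTube τ
  lam : ∀ σ ∈ T, ∀ τ ∈ T, σ ⊆ τ ∨ τ ⊆ σ ∨ ∀ x ∈ σ, x ∉ τ
  acyc : ∀ τ ∈ T, ¬ Relation.TransGen (TubingRel T) τ τ
  conn : IsConnectedIn (Finset.univ : Finset α)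
  hn : 2 ≤ Fintype.card α

variable {T}

lemma Ctx.tube_nonempty (hC : Ctx T) {τ : Finset α} (h : τ ∈ T) : τ.Nonempty := by
  have := (hC.prop τ h).1.2.2
  exact Finset.card_pos.mp (by omega)

lemma Ctx.univ_not_mem (hC : Ctx T) : (Finset.univ : Finset α) ∉ T := by
  intro h
  have h1 := (hC.prop _ h).2
  have h2 : (Finset.univ : Finset α).card = Fintype.card α := Finset.card_univ
  have := hC.hn
  omega

lemma Ctx.node_conn (hC : Ctx T) {τ : Finset α} (h : IsNodeT T τ) : IsConnectedIn τ := by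
  rcases h with h | h
  · rw [h]; exact hC.conn
  · exact (hC.prop τ h).1.1

lemma Ctx.node_convex (hC : Ctx T) {τ : Finset α} (h : IsNodeT T τ) : IsConvexIn τ := by
  rcases h with h | h
  · rw [h]; intro a _ c _ b _ _; exact Finset.mem_univ b
  · exact (hC.prop τ h).1.2.1

lemma Ctx.node_card (hC : Ctx T) {τ : Finset α} (h : IsNodeT T τ) : 2 ≤ τ.card := by
  rcases h with h | h
  · rw [h, Finset.card_univ]; exact hC.hn
  · exact (hC.prop τ h).1.2.2

lemma Ctx.node_nonempty (hC : Ctx T) {τ : Finset α} (h : IsNodeT T τ) : τ.Nonempty := by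
  have := hC.node_card h
  exact Finset.card_pos.mp (by omega)

lemma Ctx.mem_ssub_node (hC : Ctx T) {τ σ : Finset α} (hτ : IsNodeT T τ) (hσ : σ ∈ T)
    (hne : σ ≠ τ) : σ ⊂ τ ∨ τ ⊂ σ ∨ ∀ x ∈ σ, x ∉ τ := by
  rcases hτ with h | h
  · left; rw [h]; exact Finset.ssubset_univ_iff.mpr (by rw [← h]; exact hne)
  · rcases hC.lam σ hσ τ h with h1 | h1 | h1
    · left; exact h1.ssubset_of_ne hne
    · right; left; exact h1.ssubset_of_ne (Ne.symm hne)
    · right; right; exact h1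

lemma exists_child (hC : Ctx T) {τ σ : Finset α} (hσ : σ ∈ T) (hss : σ ⊂ τ) :
    ∃ ρ, IsChildT T τ ρ ∧ σ ⊆ ρ := by
  classical
  have hne : (T.filter (fun ρ => σ ⊆ ρ ∧ ρ ⊂ τ)).Nonempty :=
    ⟨σ, by simp [hσ, hss]⟩
  obtain ⟨ρ, hρ, hmax'⟩ := Finset.exists_maximal hne
  have hmax : ∀ x ∈ T.filter (fun ρ => σ ⊆ ρ ∧ ρ ⊂ τ), ¬ ρ < x :=
    fun x hx hlt => (not_le_of_gt hlt) (hmax' hx hlt.le)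
  simp only [Finset.mem_filter] at hρ
  refine ⟨ρ, ⟨hρ.1, hρ.2.2, ?_⟩, hρ.2.1⟩
  intro ρ' hρ' hss' hsub
  by_contra hne'
  refine hmax ρ' ?_ (lt_of_le_of_ne hsub hne')
  simp only [Finset.mem_filter]
  exact ⟨hρ', hρ.2.1.trans hsub, hss'⟩

lemma child_block {τ ρ : Finset α} (h : IsChildT T τ ρ) : IsBlockT T τ ρ := Or.inl h

lemma block_sub {τ B : Finset α} (h : IsBlockT T τ B) : B ⊆ τ := by
  rcases h with h | ⟨x, hx, rfl, _⟩
  · exact h.2.1.subset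
  · simpa using hx

lemma block_nonempty (hC : Ctx T) {τ B : Finset α} (h : IsBlockT T τ B) : B.Nonempty := by
  rcases h with h | ⟨x, _, rfl, _⟩
  · exact hC.tube_nonempty h.1
  · simp

lemma block_cases (hC : Ctx T) {τ B : Finset α} (h : IsBlockT T τ B) :
    (B ∈ T ∧ B ⊂ τ) ∨ ∃ x, B = {x} := by
  rcases h with h | ⟨x, _, rfl, _⟩
  · exact Or.inl ⟨h.1, h.2.1⟩
  · exact Or.inr ⟨x, rfl⟩

lemma block_convex (hC : Ctx T) {τ B : Finset α} (h : IsBlockT T τ B) : IsConvexIn B := by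
  rcases h with h | ⟨x, _, rfl, _⟩
  · exact (hC.prop _ h.1).1.2.1
  · intro a ha c hc b hab hbc
    simp only [Finset.mem_singleton] at ha hc ⊢
    subst ha; subst hc
    exact _root_.le_antisymm hbc hab

lemma children_disjoint (hC : Ctx T) {τ ρ1 ρ2 : Finset α} (h1 : IsChildT T τ ρ1)
    (h2 : IsChildT T τ ρ2) (hne : ρ1 ≠ ρ2) : ∀ x ∈ ρ1, x ∉ ρ2 := by
  rcases hC.lam ρ1 h1.1 ρ2 h2.1 with h | h | h
  · exact absurd (h1.2.2 ρ2 h2.1 h2.2.1 h) hne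
  · exact absurd (h2.2.2 ρ1 h1.1 h1.2.1 h).symm hne
  · exact h

lemma blocks_disjoint (hC : Ctx T) {τ B C : Finset α} (hB : IsBlockT T τ B)
    (hC' : IsBlockT T τ C) (hne : B ≠ C) : ∀ x ∈ B, x ∉ C := by
  rcases hB with hB | ⟨x, hx, rfl, hxc⟩
  · rcases hC' with hC' | ⟨y, hy, rfl, hyc⟩
    · exact children_disjoint hC hB hC' hne
    · intro z hz hz2
      simp only [Finset.mem_singleton] at hz2
      subst hz2
      exact hyc B hB hz
  · rcases hC' with hC' | ⟨y, hy, rfl, hyc⟩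
    · intro z hz hz2
      simp only [Finset.mem_singleton] at hz
      subst hz
      exact hxc C hC' hz2
    · intro z hz hz2
      simp only [Finset.mem_singleton] at hz hz2
      subst hz; subst hz2
      exact hne rfl

lemma block_unique (hC : Ctx T) {τ B C : Finset α} (hB : IsBlockT T τ B)
    (hC' : IsBlockT T τ C) {x : α} (hxB : x ∈ B) (hxC : x ∈ C) : B = C := by
  by_contra hne
  exact blocks_disjoint hC hB hC' hne x hxB hxC

lemma exists_block (hC : Ctx T) {τ : Finset α} {x : α} (hx : x ∈ τ) :
    ∃ B, IsBlockT T τ B ∧ x ∈ B := by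
  by_cases h : ∃ ρ, IsChildT T τ ρ ∧ x ∈ ρ
  · obtain ⟨ρ, hρ, hxρ⟩ := h
    exact ⟨ρ, Or.inl hρ, hxρ⟩
  · push_neg at h
    exact ⟨{x}, Or.inr ⟨x, hx, rfl, h⟩, by simp⟩

lemma sub_block_of_ssub (hC : Ctx T) {τ σ : Finset α} (hσ : σ ∈ T) (hss : σ ⊂ τ) :
    ∃ B, IsBlockT T τ B ∧ σ ⊆ B := by
  obtain ⟨ρ, hρ, hsub⟩ := exists_child hC hσ hss
  exact ⟨ρ, Or.inl hρ, hsub⟩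


lemma two_cycle (hC : Ctx T) {τ B C : Finset α} (h1 : RelBT T τ B C) (h2 : RelBT T τ C B) :
    False := by
  obtain ⟨hB, hCb, hne, a, ha, c, hc, hac⟩ := h1
  obtain ⟨_, _, hne2, c', hc', a', ha', hca⟩ := h2
  rcases block_cases hC hCb with ⟨hCT, _⟩ | ⟨y, rfl⟩
  · rcases block_cases hC hB with ⟨hBT, _⟩ | ⟨x, rfl⟩
    · have r1 : TubingRel T B C := ⟨hBT, hCT, blocks_disjoint hC hB hCb hne, a, ha, c, hc, hac⟩
      have r2 : TubingRel T C B := ⟨hCT, hBT, blocks_disjoint hC hCb hB hne2, c', hc', a', ha', hca⟩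
      exact hC.acyc B hBT ((Relation.TransGen.single r1).tail r2)
    · simp only [Finset.mem_singleton] at ha ha'
      have hxC : x ∈ C := block_convex hC hCb c' hc' c hc x (ha' ▸ hca.le) (ha ▸ hac.le)
      exact blocks_disjoint hC hB hCb hne x (by simp) hxC
  · simp only [Finset.mem_singleton] at hc hc'
    have hyB : y ∈ B := block_convex hC hB a ha a' ha' y (hc ▸ hac.le) (hc' ▸ hca.le)
    exact blocks_disjoint hC hCb hB hne2 y (by simp) hyB

lemma chain_mem_block {τ : Finset α} : ∀ (l : List (Finset α)) (B : Finset α),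
    List.Chain (RelBT T τ) B l → ∀ x ∈ l, IsBlockT T τ x := by
  intro l
  induction l with
  | nil => intro B _ x hx; simp at hx
  | cons C l ih =>
    intro B h x hx
    rw [List.chain_cons] at h
    rcases List.mem_cons.mp hx with rfl | hx
    · exact h.1.2.1
    · exact ih C h.2 x hx

lemma chain_tubing {τ : Finset α} (hC : Ctx T) : ∀ (l : List (Finset α)) (B : Finset α),
    List.Chain (RelBT T τ) B l → B ∈ T → (∀ x ∈ l, x ∈ T) →
    List.Chain (TubingRel T) B l := by
  intro l
  induction l with
  | nil => intro B _ _ _; exact List.Chain.nil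
  | cons C l ih =>
    intro B h hBT hl
    rw [List.chain_cons] at h ⊢
    obtain ⟨⟨hBb, hCb, hne, w⟩, h2⟩ := h
    have hCT : C ∈ T := hl C (by simp)
    refine ⟨⟨hBT, hCT, blocks_disjoint hC hBb hCb hne, w⟩, ?_⟩
    exact ih C h2 hCT (fun x hx => hl x (by simp [hx]))

lemma relb_trans_singleton {τ w v : Finset α} {x : α} (h1 : RelBT T τ w {x})
    (h2 : RelBT T τ ({x} : Finset α) v) (hne : w ≠ v) : RelBT T τ w v := by
  obtain ⟨hwb, _, _, u, hu, c, hc, hult⟩ := h1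
  obtain ⟨_, hvb, _, a, ha, d, hd, hlt⟩ := h2
  simp only [Finset.mem_singleton] at hc ha
  exact ⟨hwb, hvb, hne, u, hu, d, hd, by rw [hc] at hult; rw [ha] at hlt; exact hult.trans hlt⟩

lemma no_relb_cycle (hC : Ctx T) (τ : Finset α) (B : Finset α) :
    ¬ Relation.TransGen (RelBT T τ) B B := by
  classical
  suffices h : ∀ n (B : Finset α) (l : List (Finset α)), l.length ≤ n →
      List.Chain (RelBT T τ) B (l ++ [B]) → False by
    intro hB
    obtain ⟨l, hl⟩ := transGen_chain hB
    exact h l.length B l le_rfl hl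
  intro n
  induction n with
  | zero =>
    intro B l hlen hch
    have : l = [] := List.length_eq_zero.mp (by omega)
    subst this
    simp only [List.nil_append, List.chain_singleton] at hch
    exact hch.2.2.1 rfl
  | succ n ih =>
    intro B l hlen hch
    rcases l with _ | ⟨C, l'⟩
    · simp only [List.nil_append, List.chain_singleton] at hch
      exact hch.2.2.1 rfl
    rw [List.cons_append, List.chain_cons] at hch
    obtain ⟨hBC, hch'⟩ := hch
    by_cases hall : ∀ x ∈ B :: C :: l', x ∈ T
    · -- all tubes
      have hchT : List.Chain (TubingRel T) B ((C :: l') ++ [B]) := by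
        refine chain_tubing (τ := τ) hC _ _ ?_ (hall B (by simp)) ?_
        · rw [List.cons_append, List.chain_cons]; exact ⟨hBC, hch'⟩
        · intro x hx
          rcases List.mem_append.mp hx with hx | hx
          · exact hall x (by simp [hx])
          · simp only [List.mem_singleton] at hx; subst hx; exact hall x (by simp)
      exact hC.acyc B (hall B (by simp)) (chain_transGen hchT)
    · push_neg at hall
      obtain ⟨S, hSmem, hST⟩ := hall
      rcases List.mem_cons.mp hSmem with hSB | hSmem
      · -- head singleton: S = B
        rw [hSB] at hST
        have hBb : IsBlockT T τ B := hBC.1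
        obtain ⟨x, hBx⟩ := (block_cases hC hBb).resolve_left (fun h => hST h.1)
        subst hBx
        obtain ⟨w, hw, hwB⟩ := chain_penult hch'
        have hrep : ∀ w', RelBT T τ w' ({x} : Finset α) → RelBT T τ w' C := by
          intro w' hw'
          by_cases hwc : w' = C
          · subst hwc; exact (two_cycle hC hBC hw').elim
          · obtain ⟨hw'b, _, _, u, hu, c, hc, hult⟩ := hw'
            simp only [Finset.mem_singleton] at hc
            subst hc
            obtain ⟨_, hCb, hneBC, a, ha, v, hv, hlt⟩ := hBC
            simp only [Finset.mem_singleton] at ha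
            subst ha
            exact ⟨hw'b, hCb, hwc, u, hu, v, hv, hult.trans hlt⟩
        have : List.Chain (RelBT T τ) C (l' ++ [C]) := chain_replace_last hrep hch'
        exact ih C l' (by simp at hlen; omega) this
      · -- interior singleton S ∈ C :: l'
        obtain ⟨l1, l2, hdec⟩ := List.append_of_mem hSmem
        have hfull : List.Chain (RelBT T τ) B ((C :: l') ++ [B]) := by
          rw [List.cons_append, List.chain_cons]; exact ⟨hBC, hch'⟩
        rw [hdec] at hfull
        have heq : (l1 ++ S :: l2) ++ [B] = l1 ++ S :: (l2 ++ [B]) := by simp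
        rw [heq, List.chain_split] at hfull
        obtain ⟨h1, h2⟩ := hfull
        obtain ⟨w0, _, hw0S⟩ := chain_penult h1
        obtain ⟨x, hSx⟩ := (block_cases hC hw0S.2.1).resolve_left (fun h => hST h.1)
        subst hSx
        have hlend := congrArg List.length hdec
        simp only [List.length_cons, List.length_append] at hlend hlen
        rcases l2 with _ | ⟨z, l2'⟩
        · simp only [List.nil_append, List.chain_singleton] at h2
          have hrep : ∀ w', RelBT T τ w' ({x} : Finset α) → RelBT T τ w' B := by
            intro w' hw'
            by_cases hwb : w' = B
            · subst hwb; exact (two_cycle hC hw' h2).elim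
            · exact relb_trans_singleton hw' h2 hwb
          exact ih B l1 (by simp at hlend; omega) (chain_replace_last hrep h1)
        · rw [List.cons_append, List.chain_cons] at h2
          obtain ⟨hSz, htail⟩ := h2
          have hrep : ∀ w', RelBT T τ w' ({x} : Finset α) → RelBT T τ w' z := by
            intro w' hw'
            by_cases hwz : w' = z
            · subst hwz; exact (two_cycle hC hw' hSz).elim
            · exact relb_trans_singleton hw' hSz hwz
          have h1' := chain_replace_last hrep h1
          have hcomb : List.Chain (RelBT T τ) B (l1 ++ z :: (l2' ++ [B])) :=
            List.chain_split.mpr ⟨h1', htail⟩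
          have heq2 : l1 ++ z :: (l2' ++ [B]) = (l1 ++ z :: l2') ++ [B] := by simp
          rw [heq2] at hcomb
          exact ih B (l1 ++ z :: l2') (by simp only [List.length_cons, List.length_append] at *; omega) hcomb

lemma exists_cov_between_blocks (hC : Ctx T) {τ : Finset α} (hτ : IsNodeT T τ)
    {B C : Finset α} (hB : IsBlockT T τ B) (hC2 : IsBlockT T τ C) (hne : B ≠ C) :
    ∃ D E, IsBlockT T τ D ∧ IsBlockT T τ E ∧ D ≠ E ∧ ∃ i ∈ D, ∃ j ∈ E, i ⋖ j := by
  obtain ⟨a, ha⟩ := block_nonempty hC hB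
  obtain ⟨b, hb⟩ := block_nonempty hC hC2
  have haτ : a ∈ τ := block_sub hB ha
  have hbτ : b ∈ τ := block_sub hC2 hb
  have hwalk := hC.node_conn hτ a haτ b hbτ
  clear haτ hbτ
  suffices h : ∀ u, Relation.ReflTransGen (fun x y => x ∈ τ ∧ y ∈ τ ∧ (x ⋖ y ∨ y ⋖ x)) u b →
      ∀ B, IsBlockT T τ B → u ∈ B → B ≠ C →
      ∃ D E, IsBlockT T τ D ∧ IsBlockT T τ E ∧ D ≠ E ∧ ∃ i ∈ D, ∃ j ∈ E, i ⋖ j by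
    exact h a hwalk B hB ha hne
  intro u hu
  induction hu using Relation.ReflTransGen.head_induction_on with
  | refl =>
    intro B hB hub hne'
    exact absurd (block_unique hC hB hC2 hub hb) hne'
  | @head u w hrel hrtg ih =>
    intro B hB huB hne'
    obtain ⟨huτ, hwτ, hcov⟩ := hrel
    obtain ⟨Dw, hDw, hwDw⟩ := exists_block hC (τ := τ) hwτ
    by_cases hDwB : Dw = B
    · exact ih B (hDwB ▸ hDw) (hDwB ▸ hwDw) hne'
    · rcases hcov with hcov | hcov
      · exact ⟨B, Dw, hB, hDw, Ne.symm hDwB, u, huB, w, hwDw, hcov⟩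
      · exact ⟨Dw, B, hDw, hB, hDwB, w, hwDw, u, huB, hcov⟩

open Classical in
noncomputable def btwF (T0 : Finset (Finset α)) (τ B C : Finset α) : Finset (Finset α) :=
  Finset.univ.filter (fun X => Relation.TransGen (RelBT T0 τ) B X ∧
    Relation.TransGen (RelBT T0 τ) X C)

lemma cover_arc_exists (hC : Ctx T) {τ B0 C0 : Finset α} (h0 : RelBT T τ B0 C0) :
    ∃ B C, RelBT T τ B C ∧
      ∀ X, ¬(Relation.TransGen (RelBT T τ) B X ∧ Relation.TransGen (RelBT T τ) X C) := by
  classical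
  suffices h : ∀ n (B C : Finset α), RelBT T τ B C → (btwF T τ B C).card ≤ n →
      ∃ B' C', RelBT T τ B' C' ∧
      ∀ X, ¬(Relation.TransGen (RelBT T τ) B' X ∧ Relation.TransGen (RelBT T τ) X C') by
    exact h _ B0 C0 h0 le_rfl
  intro n
  induction n with
  | zero =>
    intro B C hBC hcard
    refine ⟨B, C, hBC, fun X hX => ?_⟩
    have : X ∈ btwF T τ B C := by simp [btwF, hX.1, hX.2]
    have := Finset.card_pos.2 ⟨X, this⟩
    omega
  | succ n ih =>
    intro B C hBC hcard
    by_cases hemp : (btwF T τ B C) = ∅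
    · refine ⟨B, C, hBC, fun X hX => ?_⟩
      have : X ∈ btwF T τ B C := by simp [btwF, hX.1, hX.2]
      simp [hemp] at this
    · obtain ⟨X, hX⟩ := Finset.nonempty_of_ne_empty hemp
      simp only [btwF, Finset.mem_filter, Finset.mem_univ, true_and] at hX
      obtain ⟨hBX, hXC⟩ := hX
      obtain ⟨Y, hXY, hYC⟩ := Relation.TransGen.tail'_iff.mp hXC
      have hssub : btwF T τ Y C ⊂ btwF T τ B C := by
        constructor
        · intro Z hZ
          simp only [btwF, Finset.mem_filter, Finset.mem_univ, true_and] at hZ ⊢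
          exact ⟨(hBX.trans_left hXY).trans hZ.1, hZ.2⟩
        · intro hsub
          have hYmem : Y ∈ btwF T τ B C := by
            simp only [btwF, Finset.mem_filter, Finset.mem_univ, true_and]
            exact ⟨hBX.trans_left hXY, Relation.TransGen.single hYC⟩
          have : Y ∈ btwF T τ Y C := hsub hYmem
          simp only [btwF, Finset.mem_filter, Finset.mem_univ, true_and] at this
          exact no_relb_cycle hC τ Y this.1
      have := Finset.card_lt_card hssub
      exact ih Y C hYC (by omega)

lemma no_rev_cov (hC : Ctx T) {τ B C : Finset α} (h : RelBT T τ B C) :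
    ∀ i ∈ C, ∀ j ∈ B, ¬ i ⋖ j := by
  intro i hi j hj hcov
  exact two_cycle hC h ⟨h.2.1, h.1, Ne.symm h.2.2.1, i, hi, j, hj, hcov.lt⟩

lemma hasse_of_cover_arc (hC : Ctx T) {τ B1 B2 : Finset α} (hτ : IsNodeT T τ)
    (harc : RelBT T τ B1 B2)
    (hcover : ∀ X, ¬(Relation.TransGen (RelBT T τ) B1 X ∧ Relation.TransGen (RelBT T τ) X B2)) :
    ∃ i ∈ B1, ∃ j ∈ B2, i ⋖ j := by
  obtain ⟨hB1, hB2, hne, a, ha, b, hb, hab⟩ := harc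
  obtain ⟨l, hl, hmem⟩ := exists_covChain hab
  have haτ : a ∈ τ := block_sub hB1 ha
  have hbτ : b ∈ τ := block_sub hB2 hb
  clear hab
  suffices h : ∀ (l : List α) (z : α), z ∈ B1 → List.Chain (· ⋖ ·) z (l ++ [b]) →
      (∀ x ∈ l, a < x ∧ x < b) → ∃ i ∈ B1, ∃ j ∈ B2, i ⋖ j by
    exact h l a ha hl hmem
  intro l
  induction l with
  | nil =>
    intro z hz hch _
    exact ⟨z, hz, b, hb, by simpa using hch⟩
  | cons x l' ihl =>
    intro z hz hch hm
    rw [List.cons_append, List.chain_cons] at hch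
    obtain ⟨hzx, hch'⟩ := hch
    have hx := hm x (by simp)
    have hxτ : x ∈ τ := hC.node_convex hτ a haτ b hbτ x hx.1.le hx.2.le
    obtain ⟨Dx, hDx, hxDx⟩ := exists_block hC (τ := τ) hxτ
    by_cases hDxB1 : Dx = B1
    · exact ihl x (hDxB1 ▸ hxDx) hch' (fun y hy => hm y (by simp [hy]))
    · by_cases hDxB2 : Dx = B2
      · exact ⟨z, hz, x, hDxB2 ▸ hxDx, hzx⟩
      · exfalso
        refine hcover Dx ⟨Relation.TransGen.single ?_, Relation.TransGen.single ?_⟩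
        · exact ⟨hB1, hDx, Ne.symm hDxB1, a, ha, x, hxDx, hx.1⟩
        · exact ⟨hDx, hB2, hDxB2, x, hxDx, b, hb, hx.2⟩

lemma block_conn (hC : Ctx T) {τ B : Finset α} (h : IsBlockT T τ B) : IsConnectedIn B := by
  rcases h with h | ⟨x, _, rfl, _⟩
  · exact (hC.prop _ h.1).1.1
  · intro a ha b hb
    simp only [Finset.mem_singleton] at ha hb
    rw [ha, hb]

lemma lemC (hC : Ctx T) {τ : Finset α} (hτ : IsNodeT T τ) {ρend : Finset α} (hend : ρend ⊂ τ) :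
    ∀ u, Relation.ReflTransGen (TubingRel T) u ρend → ¬(u ⊂ τ) → u ≠ τ →
    ∃ v, Relation.ReflTransGen (TubingRel T) u v ∧ TubingRel T v τ := by
  intro u hu
  induction hu using Relation.ReflTransGen.head_induction_on with
  | refl => intro h1 _; exact absurd hend h1
  | @head u w hstep hrtg ih =>
    intro husub hune
    obtain ⟨huT, hwT, hdisj, x, hxu, y, hyw, hxy⟩ := hstep
    by_cases hwτ : w ⊂ τ
    · -- u leaves τ here; u must be disjoint from τ
      rcases hC.mem_ssub_node hτ huT hune with h | h | h
      · exact absurd h husub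
      · exact absurd (hdisj y (h.subset (hwτ.subset hyw))) (fun hy => hy hyw)
      · -- h : ∀ x ∈ u, x ∉ τ
        have hτT : τ ∈ T := by
          rcases hτ with rfl | hτT
          · exact absurd (Finset.mem_univ x) (h x hxu)
          · exact hτT
        exact ⟨u, Relation.ReflTransGen.refl,
          ⟨huT, hτT, h, x, hxu, y, hwτ.subset hyw, hxy⟩⟩
    · by_cases hweq : w = τ
      · exact ⟨u, Relation.ReflTransGen.refl, hweq ▸ ⟨huT, hwT, hdisj, x, hxu, y, hyw, hxy⟩⟩
      · obtain ⟨v, hv1, hv2⟩ := ih hwτ hweq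
        exact ⟨v, Relation.ReflTransGen.head ⟨huT, hwT, hdisj, x, hxu, y, hyw, hxy⟩ hv1, hv2⟩

lemma lemB (hC : Ctx T) {τ : Finset α} (hτ : IsNodeT T τ) {ρend : Finset α} :
    ∀ σ, Relation.ReflTransGen (TubingRel T) σ ρend → σ ⊂ τ →
    ∀ Cb, IsBlockT T τ Cb → σ ⊆ Cb →
    (∃ D, IsBlockT T τ D ∧ ρend ⊆ D ∧ Relation.ReflTransGen (RelBT T τ) Cb D) ∨
    (∃ u, ¬(u ⊂ τ) ∧ u ≠ τ ∧ TubingRel T τ u ∧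
      Relation.ReflTransGen (TubingRel T) u ρend) := by
  intro σ hσ
  induction hσ using Relation.ReflTransGen.head_induction_on with
  | refl =>
    intro _ Cb hCb hsub
    exact Or.inl ⟨Cb, hCb, hsub, Relation.ReflTransGen.refl⟩
  | @head σ w hstep hrtg ih =>
    intro hσss Cb hCb hsub
    obtain ⟨hσT, hwT, hdisj, x, hxσ, y, hyw, hxy⟩ := hstep
    by_cases hwτ : w ⊂ τ
    · obtain ⟨D1, hD1, hwD1⟩ := sub_block_of_ssub hC hwT hwτ
      rcases ih hwτ D1 hD1 hwD1 with ⟨D, hD, hsub', hr⟩ | hright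
      · refine Or.inl ⟨D, hD, hsub', ?_⟩
        by_cases hCbD1 : Cb = D1
        · exact hCbD1 ▸ hr
        · exact Relation.ReflTransGen.head
            ⟨hCb, hD1, hCbD1, x, hsub hxσ, y, hwD1 hyw, hxy⟩ hr
      · exact Or.inr hright
    · have hσne : σ.Nonempty := hC.tube_nonempty hσT
      by_cases hweq : w = τ
      · obtain ⟨z, hz⟩ := hσne
        exact absurd (hweq ▸ (hσss.subset hz)) (hdisj z hz)
      · rcases hC.mem_ssub_node hτ hwT hweq with h | h | h
        · exact absurd h hwτ
        · obtain ⟨z, hz⟩ := hσne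
          exact absurd (h.subset (hσss.subset hz)) (fun hzw => hdisj z hz hzw)
        · -- h : ∀ x ∈ w, x ∉ τ
          have hτT : τ ∈ T := by
            rcases hτ with rfl | hτT
            · exact absurd (Finset.mem_univ y) (h y hyw)
            · exact hτT
          refine Or.inr ⟨w, hwτ, hweq, ⟨hτT, hwT, fun z hz hzw => h z hzw hz, x,
            hσss.subset hxσ, y, hyw, hxy⟩, hrtg⟩

lemma core (hC : Ctx T) {τ B1 B2 : Finset α} (hτ : IsNodeT T τ)
    (harc : RelBT T τ B1 B2)
    (hcov : ∀ X, ¬(Relation.TransGen (RelBT T τ) B1 X ∧ Relation.TransGen (RelBT T τ) X B2))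
    {σ1 ρ : Finset α} (hσ1T : σ1 ∈ T) (hρT : ρ ∈ T)
    (hd1 : ∀ x ∈ B1 ∪ B2, x ∉ σ1) (hwit1 : ∃ a ∈ B1 ∪ B2, ∃ b ∈ σ1, a < b)
    (hrtg : Relation.ReflTransGen (TubingRel T) σ1 ρ)
    (hd2 : ∀ x ∈ ρ, x ∉ B1 ∪ B2) (hwit2 : ∃ c ∈ ρ, ∃ d ∈ B1 ∪ B2, c < d) : False := by
  have hB1 := harc.1
  have hB2 := harc.2.1
  have hne12 := harc.2.2.1
  obtain ⟨a, haU, b, hbσ1, hab⟩ := hwit1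
  obtain ⟨c, hcρ, d, hdU, hcd⟩ := hwit2
  have hτ'τ : B1 ∪ B2 ⊆ τ := Finset.union_subset (block_sub hB1) (block_sub hB2)
  -- position of σ1 w.r.t. τ
  have hσ1netau : σ1 ≠ τ := by
    intro h; exact hd1 a haU (h ▸ (hτ'τ haU))
  -- position of ρ w.r.t. τ
  have hρnetau : ρ ≠ τ := by
    intro h; exact hd2 d (h ▸ (hτ'τ hdU)) hdU
  have hρpos := hC.mem_ssub_node hτ hρT hρnetau
  have hρnotsup : ¬ τ ⊂ ρ := by
    intro h; exact hd2 d (h.subset (hτ'τ hdU)) hdU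
  -- helper : if ρ is disjoint from τ then TubingRel ρ τ
  have hρexit : (∀ x ∈ ρ, x ∉ τ) → τ ∈ T → TubingRel T ρ τ := by
    intro h hτT
    exact ⟨hρT, hτT, h, c, hcρ, d, hτ'τ hdU, hcd⟩
  rcases hC.mem_ssub_node hτ hσ1T hσ1netau with hσ1ss | hσ1sup | hσ1dis
  · -- σ1 ⊂ τ : project to blocks
    obtain ⟨Cb, hCb, hσ1Cb⟩ := sub_block_of_ssub hC hσ1T hσ1ss
    have hCbB1 : Cb ≠ B1 := by
      intro h
      exact hd1 b (Finset.mem_union_left _ (h ▸ hσ1Cb hbσ1)) hbσ1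
    have hCbB2 : Cb ≠ B2 := by
      intro h
      exact hd1 b (Finset.mem_union_right _ (h ▸ hσ1Cb hbσ1)) hbσ1
    rcases lemB hC hτ σ1 hrtg hσ1ss Cb hCb hσ1Cb with ⟨D, hD, hρD, hmid⟩ | ⟨u, hu1, hu2, hu3, hu4⟩
    · have hDB1 : D ≠ B1 := by
        intro h
        exact hd2 c hcρ (Finset.mem_union_left _ (h ▸ hρD hcρ))
      have hDB2 : D ≠ B2 := by
        intro h
        exact hd2 c hcρ (Finset.mem_union_right _ (h ▸ hρD hcρ))
      rcases Finset.mem_union.mp haU with haB | haB <;> rcases Finset.mem_union.mp hdU with hdB | hdB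
      · -- exit B1, entry B1 : cycle at B1
        have arcOut : RelBT T τ B1 Cb := ⟨hB1, hCb, Ne.symm hCbB1, a, haB, b, hσ1Cb hbσ1, hab⟩
        have arcIn : RelBT T τ D B1 := ⟨hD, hB1, hDB1, c, hρD hcρ, d, hdB, hcd⟩
        exact no_relb_cycle hC τ B1
          (((Relation.TransGen.single arcOut).trans_left hmid).tail arcIn)
      · -- exit B1, entry B2 : contradicts cover property with X = Cb
        have arcOut : RelBT T τ B1 Cb := ⟨hB1, hCb, Ne.symm hCbB1, a, haB, b, hσ1Cb hbσ1, hab⟩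
        have arcIn : RelBT T τ D B2 := ⟨hD, hB2, hDB2, c, hρD hcρ, d, hdB, hcd⟩
        exact hcov Cb ⟨Relation.TransGen.single arcOut,
          Relation.TransGen.trans_right hmid (Relation.TransGen.single arcIn)⟩
      · -- exit B2, entry B1 : combined with harc gives cycle at B1
        have arcOut : RelBT T τ B2 Cb := ⟨hB2, hCb, Ne.symm hCbB2, a, haB, b, hσ1Cb hbσ1, hab⟩
        have arcIn : RelBT T τ D B1 := ⟨hD, hB1, hDB1, c, hρD hcρ, d, hdB, hcd⟩
        have t1 : Relation.TransGen (RelBT T τ) B2 B1 :=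
          ((Relation.TransGen.single arcOut).trans_left hmid).tail arcIn
        exact no_relb_cycle hC τ B1 ((Relation.TransGen.single harc).trans t1)
      · -- exit B2, entry B2 : cycle at B2
        have arcOut : RelBT T τ B2 Cb := ⟨hB2, hCb, Ne.symm hCbB2, a, haB, b, hσ1Cb hbσ1, hab⟩
        have arcIn : RelBT T τ D B2 := ⟨hD, hB2, hDB2, c, hρD hcρ, d, hdB, hcd⟩
        exact no_relb_cycle hC τ B2
          (((Relation.TransGen.single arcOut).trans_left hmid).tail arcIn)
    · -- chain left τ at u
      have hτT : τ ∈ T := hu3.1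
      rcases hρpos with h | h | h
      · obtain ⟨v, hv1, hv2⟩ := lemC hC hτ h u hu4 hu1 hu2
        exact hC.acyc τ hτT
          (((Relation.TransGen.single hu3).trans_left hv1).tail hv2)
      · exact absurd h hρnotsup
      · exact hC.acyc τ hτT
          (((Relation.TransGen.single hu3).trans_left hu4).tail (hρexit h hτT))
  · -- τ ⊂ σ1 : impossible
    exact hd1 a haU (hσ1sup.subset (hτ'τ haU))
  · -- σ1 disjoint from τ
    have hτT : τ ∈ T := by
      rcases hτ with rfl | hτT
      · exact absurd (Finset.mem_univ b) (hσ1dis b hbσ1)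
      · exact hτT
    have hrel1 : TubingRel T τ σ1 :=
      ⟨hτT, hσ1T, fun z hz hz2 => hσ1dis z hz2 hz, a, hτ'τ haU, b, hbσ1, hab⟩
    have hσ1notss : ¬ σ1 ⊂ τ := fun h => hσ1dis b hbσ1 (h.subset hbσ1)
    rcases hρpos with h | h | h
    · obtain ⟨v, hv1, hv2⟩ := lemC hC hτ h σ1 hrtg hσ1notss hσ1netau
      exact hC.acyc τ hτT
        (((Relation.TransGen.single hrel1).trans_left hv1).tail hv2)
    · exact absurd h hρnotsup
    · exact hC.acyc τ hτT
        (((Relation.TransGen.single hrel1).trans_left hrtg).tail (hρexit h hτT))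

lemma tprime_no_cycle (hC : Ctx T) {τ B1 B2 : Finset α} (hτ : IsNodeT T τ)
    (harc : RelBT T τ B1 B2)
    (hcov : ∀ X, ¬(Relation.TransGen (RelBT T τ) B1 X ∧ Relation.TransGen (RelBT T τ) X B2)) :
    ∀ x, ¬ Relation.TransGen (TubingRel (insert (B1 ∪ B2) T)) x x := by
  classical
  set τ' := B1 ∪ B2 with hτ'def
  obtain ⟨w0, hw0⟩ := block_nonempty hC harc.1
  have hw0' : w0 ∈ τ' := Finset.mem_union_left _ hw0
  set R' := TubingRel (insert τ' T) with hR'def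
  have hstep : ∀ x y, R' x y → x ≠ τ' → y ≠ τ' → TubingRel T x y := by
    rintro x y ⟨hx, hy, hd, w⟩ hxne hyne
    exact ⟨(Finset.mem_insert.mp hx).resolve_left hxne,
      (Finset.mem_insert.mp hy).resolve_left hyne, hd, w⟩
  have hconv : ∀ (L : List (Finset α)) z, List.Chain R' z L → z ≠ τ' → (∀ w ∈ L, w ≠ τ') →
      List.Chain (TubingRel T) z L := by
    intro L
    induction L with
    | nil => intro z _ _ _; exact List.Chain.nil
    | cons y L ih =>
      intro z hch hz hL
      rw [List.chain_cons] at hch ⊢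
      exact ⟨hstep z y hch.1 hz (hL y (by simp)),
        ih y hch.2 (hL y (by simp)) (fun w hw => hL w (by simp [hw]))⟩
  have hA : ¬ Relation.TransGen R' τ' τ' := by
    intro h
    obtain ⟨l, hl⟩ := transGen_chain h
    have hred : ∀ n (l : List (Finset α)), l.length ≤ n →
        List.Chain R' τ' (l ++ [τ']) → False := by
      intro n
      induction n with
      | zero =>
        intro l hlen hch
        have : l = [] := List.length_eq_zero.mp (by omega)
        subst this
        simp only [List.nil_append, List.chain_singleton] at hch
        exact hch.2.2.1 w0 hw0' hw0'
      | succ n ih =>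
        intro l hlen hch
        by_cases hmem : τ' ∈ l
        · obtain ⟨l1, l2, rfl⟩ := List.append_of_mem hmem
          have heq : (l1 ++ τ' :: l2) ++ [τ'] = l1 ++ τ' :: (l2 ++ [τ']) := by simp
          rw [heq, List.chain_split] at hch
          simp only [List.length_append, List.length_cons] at hlen
          exact ih l1 (by omega) hch.1
        · rcases l with _ | ⟨σ1, l2⟩
          · simp only [List.nil_append, List.chain_singleton] at hch
            exact hch.2.2.1 w0 hw0' hw0'
          rw [List.cons_append, List.chain_cons] at hch
          obtain ⟨hfirst, hrest⟩ := hch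
          have hσ1ne : σ1 ≠ τ' := fun h => hmem (by simp [h])
          have hl2ne : ∀ w ∈ l2, w ≠ τ' := fun w hw h => hmem (by simp [h ▸ hw])
          -- extract last element ρ and middle RTG
          obtain ⟨ρ, hρne, hlast, hmiddle⟩ :
              ∃ ρ, ρ ≠ τ' ∧ R' ρ τ' ∧ Relation.ReflTransGen (TubingRel T) σ1 ρ := by
            rcases List.eq_nil_or_concat l2 with rfl | ⟨l2', ρ, rfl⟩
            · refine ⟨σ1, hσ1ne, by simpa using hrest, Relation.ReflTransGen.refl⟩
            · have heq : (l2'.concat ρ) ++ [τ'] = l2' ++ ρ :: [τ'] := by simp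
              rw [heq, List.chain_split] at hrest
              have hρne : ρ ≠ τ' := hl2ne ρ (by simp)
              refine ⟨ρ, hρne, by simpa using hrest.2, ?_⟩
              exact chain_rtg (hconv _ _ hrest.1 hσ1ne
                (fun w hw => hl2ne w (by simp at hw; simp [hw])))
          have hσ1T : σ1 ∈ T := (Finset.mem_insert.mp hfirst.2.1).resolve_left hσ1ne
          have hρT : ρ ∈ T := (Finset.mem_insert.mp hlast.1).resolve_left hρne
          exact core hC hτ harc hcov hσ1T hρT hfirst.2.2.1 hfirst.2.2.2 hmiddle
            hlast.2.2.1 hlast.2.2.2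
    exact hred l.length l le_rfl hl
  have hmono : ∀ x y, TubingRel T x y → R' x y := by
    rintro x y ⟨hx, hy, hd, w⟩
    exact ⟨Finset.mem_insert_of_mem hx, Finset.mem_insert_of_mem hy, hd, w⟩
  have hsplit : ∀ a b, Relation.TransGen R' a b →
      Relation.TransGen (TubingRel T) a b ∨
      (Relation.ReflTransGen R' a τ' ∧ Relation.ReflTransGen R' τ' b) := by
    intro a b h
    induction h with
    | @single c h =>
      by_cases ha : a = τ'
      · subst ha; exact Or.inr ⟨Relation.ReflTransGen.refl, Relation.ReflTransGen.single h⟩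
      · by_cases hc : c = τ'
        · subst hc; exact Or.inr ⟨Relation.ReflTransGen.single h, Relation.ReflTransGen.refl⟩
        · exact Or.inl (Relation.TransGen.single (hstep _ _ h ha hc))
    | @tail b c hab hbc ih =>
      by_cases hc : c = τ'
      · subst hc
        exact Or.inr ⟨hab.to_reflTransGen.trans
          (Relation.ReflTransGen.single hbc), Relation.ReflTransGen.refl⟩
      · rcases ih with hl | ⟨r1, r2⟩
        · by_cases hb : b = τ'
          · subst hb
            refine Or.inr ⟨(Relation.TransGen.mono hmono _ _ hl).to_reflTransGen,
              Relation.ReflTransGen.single hbc⟩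
          · exact Or.inl (hl.tail (hstep b c hbc hb hc))
        · exact Or.inr ⟨r1, r2.tail hbc⟩
  intro x hx
  rcases hsplit x x hx with h | ⟨r1, r2⟩
  · have hxT : x ∈ T := by
      cases h with
      | single h' => exact h'.1
      | tail _ h' => exact h'.2.1
    exact hC.acyc x hxT h
  · exact hA (Relation.TransGen.trans_right r2 (Relation.TransGen.trans_left hx r1))

lemma three_blocks_not_maximal (hC : Ctx T) {τ : Finset α} (hτ : IsNodeT T τ)
    {C1 C2 C3 : Finset α} (h1 : IsBlockT T τ C1) (h2 : IsBlockT T τ C2) (h3 : IsBlockT T τ C3)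
    (h12 : C1 ≠ C2) (h13 : C1 ≠ C3) (h23 : C2 ≠ C3)
    (hmax : ∀ T', IsProperTubing T' → T ⊆ T' → T = T') : False := by
  classical
  obtain ⟨D, E, hD, hE, hDE, i, hi, j, hj, hij⟩ := exists_cov_between_blocks hC hτ h1 h2 h12
  have harc0 : RelBT T τ D E := ⟨hD, hE, hDE, i, hi, j, hj, hij.lt⟩
  obtain ⟨B1, B2, harc, hcov⟩ := cover_arc_exists hC harc0
  obtain ⟨i0, hi0, j0, hj0, hij0⟩ := hasse_of_cover_arc hC hτ harc hcov
  have hB1 := harc.1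
  have hB2 := harc.2.1
  have hne12 := harc.2.2.1
  set τ' := B1 ∪ B2 with hτ'def
  have hτ'τ : τ' ⊆ τ := Finset.union_subset (block_sub hB1) (block_sub hB2)
  have hdisj12 : ∀ x ∈ B1, x ∉ B2 := blocks_disjoint hC hB1 hB2 hne12
  obtain ⟨C, hCblk, hCB1, hCB2⟩ : ∃ C, IsBlockT T τ C ∧ C ≠ B1 ∧ C ≠ B2 := by
    by_contra hno
    push_neg at hno
    have f : ∀ Cx, IsBlockT T τ Cx → Cx = B1 ∨ Cx = B2 :=
      fun Cx hx => or_iff_not_imp_left.mpr (hno Cx hx)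
    rcases f C1 h1 with e | e <;> rcases f C2 h2 with g | g <;> rcases f C3 h3 with k | k <;>
      first
        | exact h12 (e.trans g.symm)
        | exact h13 (e.trans k.symm)
        | exact h23 (g.trans k.symm)
  obtain ⟨z, hzC⟩ := block_nonempty hC hCblk
  have hzτ : z ∈ τ := block_sub hCblk hzC
  have hzτ' : z ∉ τ' := by
    intro hz
    rcases Finset.mem_union.mp hz with hz | hz
    · exact hCB1 (block_unique hC hCblk hB1 hzC hz)
    · exact hCB2 (block_unique hC hCblk hB2 hzC hz)
  have hi0τ' : i0 ∈ τ' := Finset.mem_union_left _ hi0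
  have hj0τ' : j0 ∈ τ' := Finset.mem_union_right _ hj0
  have hcard2 : 2 ≤ τ'.card :=
    Finset.one_lt_card.mpr ⟨i0, hi0τ', j0, hj0τ', fun h => hdisj12 i0 hi0 (h ▸ hj0)⟩
  have hpathB : ∀ (B : Finset α), IsBlockT T τ B → B ⊆ τ' → ∀ a ∈ B, ∀ b ∈ B,
      Relation.ReflTransGen (fun x y => x ∈ τ' ∧ y ∈ τ' ∧ (x ⋖ y ∨ y ⋖ x)) a b := by
    intro B hB hBsub a ha b hb
    exact Relation.ReflTransGen.mono
      (r := fun x y => x ∈ B ∧ y ∈ B ∧ (x ⋖ y ∨ y ⋖ x))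
      (p := fun x y => x ∈ τ' ∧ y ∈ τ' ∧ (x ⋖ y ∨ y ⋖ x))
      (fun x y h => ⟨hBsub h.1, hBsub h.2.1, h.2.2⟩) _ _
      (block_conn hC hB a ha b hb)
  have hpath12 : ∀ a ∈ B1, ∀ b ∈ B2,
      Relation.ReflTransGen (fun x y => x ∈ τ' ∧ y ∈ τ' ∧ (x ⋖ y ∨ y ⋖ x)) a b := by
    intro a ha b hb
    refine (hpathB B1 hB1 Finset.subset_union_left a ha i0 hi0).trans
      (Relation.ReflTransGen.head ⟨hi0τ', hj0τ', Or.inl hij0⟩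
        (hpathB B2 hB2 Finset.subset_union_right j0 hj0 b hb))
  have hconnτ' : IsConnectedIn τ' := by
    intro a ha b hb
    rcases Finset.mem_union.mp ha with haB | haB <;> rcases Finset.mem_union.mp hb with hbB | hbB
    · exact hpathB B1 hB1 Finset.subset_union_left a haB b hbB
    · exact hpath12 a haB b hbB
    · exact rtg_symm (fun x y h => ⟨h.2.1, h.1, h.2.2.symm⟩) (hpath12 b hbB a haB)
    · exact hpathB B2 hB2 Finset.subset_union_right a haB b hbB
  have hconvτ' : IsConvexIn τ' := by
    intro a ha c hc x hax hxc
    have haτ : a ∈ τ := hτ'τ ha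
    have hcτ : c ∈ τ := hτ'τ hc
    have hxτ : x ∈ τ := hC.node_convex hτ a haτ c hcτ x hax hxc
    rcases eq_or_ne x a with rfl | hxa
    · exact ha
    rcases eq_or_ne x c with rfl | hxc2
    · exact hc
    have hax' : a < x := lt_of_le_of_ne hax (Ne.symm hxa)
    have hxc' : x < c := lt_of_le_of_ne hxc hxc2
    rcases Finset.mem_union.mp ha with haB | haB <;> rcases Finset.mem_union.mp hc with hcB | hcB
    · exact Finset.mem_union_left _ (block_convex hC hB1 a haB c hcB x hax hxc)
    · obtain ⟨Dx, hDx, hxDx⟩ := exists_block hC (τ := τ) hxτ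
      by_cases hDx1 : Dx = B1
      · exact Finset.mem_union_left _ (hDx1 ▸ hxDx)
      by_cases hDx2 : Dx = B2
      · exact Finset.mem_union_right _ (hDx2 ▸ hxDx)
      exact absurd ⟨Relation.TransGen.single ⟨hB1, hDx, Ne.symm hDx1, a, haB, x, hxDx, hax'⟩,
        Relation.TransGen.single ⟨hDx, hB2, hDx2, x, hxDx, c, hcB, hxc'⟩⟩ (hcov Dx)
    · exact (two_cycle hC harc
        ⟨hB2, hB1, Ne.symm hne12, a, haB, c, hcB, hax'.trans hxc'⟩).elim
    · exact Finset.mem_union_right _ (block_convex hC hB2 a haB c hcB x hax hxc)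
  have hssuniv : τ' ⊂ Finset.univ :=
    Finset.ssubset_univ_iff.mpr (fun h => hzτ' (h.symm ▸ Finset.mem_univ z))
  have hcardlt : τ'.card < Fintype.card α := by
    have := Finset.card_lt_card hssuniv
    rwa [Finset.card_univ] at this
  have hproper : IsProperTube τ' := ⟨⟨hconnτ', hconvτ', hcard2⟩, by omega⟩
  have hτ'notT : τ' ∉ T := by
    intro hmem
    have hss : τ' ⊂ τ := ⟨hτ'τ, fun hsup => hzτ' (hsup hzτ)⟩
    obtain ⟨Dd, hDd, hsubd⟩ := sub_block_of_ssub hC hmem hss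
    exact hne12 ((block_unique hC hB1 hDd hi0 (hsubd hi0τ')).trans
      (block_unique hC hB2 hDd hj0 (hsubd hj0τ')).symm)
  have hlamext : ∀ σ ∈ T, σ ⊆ τ' ∨ τ' ⊆ σ ∨ ∀ x ∈ σ, x ∉ τ' := by
    intro σ hσ
    by_cases hστ : σ = τ
    · exact Or.inr (Or.inl (hστ ▸ hτ'τ))
    rcases hC.mem_ssub_node hτ hσ hστ with h | h | h
    · obtain ⟨Dd, hDd, hsubd⟩ := sub_block_of_ssub hC hσ h
      by_cases e1 : Dd = B1
      · exact Or.inl (fun x hx => Finset.mem_union_left _ (e1 ▸ hsubd hx))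
      by_cases e2 : Dd = B2
      · exact Or.inl (fun x hx => Finset.mem_union_right _ (e2 ▸ hsubd hx))
      refine Or.inr (Or.inr (fun x hx hxτ' => ?_))
      rcases Finset.mem_union.mp hxτ' with hxB | hxB
      · exact e1 (block_unique hC hDd hB1 (hsubd hx) hxB)
      · exact e2 (block_unique hC hDd hB2 (hsubd hx) hxB)
    · exact Or.inr (Or.inl (hτ'τ.trans h.subset))
    · exact Or.inr (Or.inr (fun x hx hxτ' => h x hx (hτ'τ hxτ')))
  have hT'tubing : IsProperTubing (insert τ' T) := by
    refine ⟨?_, ?_, ?_⟩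
    · intro σ hσ
      rcases Finset.mem_insert.mp hσ with rfl | hσ
      · exact hproper
      · exact hC.prop σ hσ
    · intro σ hσ ρ hρ
      rcases Finset.mem_insert.mp hσ with rfl | hσ' <;> rcases Finset.mem_insert.mp hρ with rfl | hρ'
      · exact Or.inl subset_rfl
      · rcases hlamext ρ hρ' with h | h | h
        · exact Or.inr (Or.inl h)
        · exact Or.inl h
        · exact Or.inr (Or.inr (fun x hx hxρ => h x hxρ hx))
      · exact hlamext σ hσ'
      · exact hC.lam σ hσ' ρ hρ'
    · intro σ _
      exact tprime_no_cycle hC hτ harc hcov σ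
  have heq := hmax _ hT'tubing (Finset.subset_insert _ _)
  exact hτ'notT (heq ▸ Finset.mem_insert_self τ' T)

lemma two_blocks (hC : Ctx T) (hmax : ∀ T', IsProperTubing T' → T ⊆ T' → T = T')
    {τ : Finset α} (hτ : IsNodeT T τ) :
    ∃ B1 B2, IsBlockT T τ B1 ∧ IsBlockT T τ B2 ∧ B1 ≠ B2 ∧
      (∀ B, IsBlockT T τ B → B = B1 ∨ B = B2) ∧
      (∃ i ∈ B1, ∃ j ∈ B2, i ⋖ j) ∧ (∀ i ∈ B2, ∀ j ∈ B1, ¬ i ⋖ j) := by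
  classical
  obtain ⟨x, hx, y, hy, hxy⟩ := Finset.one_lt_card.mp (hC.node_card hτ)
  obtain ⟨Dx, hDx, hxDx⟩ := exists_block hC (τ := τ) hx
  obtain ⟨B1', B2', hB1', hB2', hne'⟩ :
      ∃ B1' B2', IsBlockT T τ B1' ∧ IsBlockT T τ B2' ∧ B1' ≠ B2' := by
    by_cases hall : ∀ w ∈ τ, w ∈ Dx
    · exfalso
      have hsub : τ ⊆ Dx := hall
      rcases block_cases hC hDx with ⟨_, hss⟩ | ⟨x0, rfl⟩
      · exact hss.2 hsub
      · have h1 := Finset.card_le_card hsub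
        have h2 := hC.node_card hτ
        simp only [Finset.card_singleton] at h1
        omega
    · push_neg at hall
      obtain ⟨w, hwτ, hwDx⟩ := hall
      obtain ⟨Dw, hDw, hwDw⟩ := exists_block hC (τ := τ) hwτ
      exact ⟨Dx, Dw, hDx, hDw, fun h => hwDx (h ▸ hwDw)⟩
  have honly : ∀ B, IsBlockT T τ B → B = B1' ∨ B = B2' := by
    intro B hB
    by_contra hno
    push_neg at hno
    exact three_blocks_not_maximal hC hτ hB1' hB2' hB hne' (Ne.symm hno.1) (Ne.symm hno.2) hmax
  obtain ⟨D, E, hD, hE, hDE, i, hi, j, hj, hij⟩ := exists_cov_between_blocks hC hτ hB1' hB2' hne'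
  have harc : RelBT T τ D E := ⟨hD, hE, hDE, i, hi, j, hj, hij.lt⟩
  refine ⟨D, E, hD, hE, hDE, ?_, ⟨i, hi, j, hj, hij⟩, no_rev_cov hC harc⟩
  intro B hB
  rcases honly B hB with hBB | hBB <;> rcases honly D hD with e | e <;> rcases honly E hE with f | f <;>
    first
      | exact absurd (e.trans f.symm) hDE
      | exact Or.inl (hBB.trans e.symm)
      | exact Or.inr (hBB.trans f.symm)

open Classical in
noncomputable def crossS (B C : Finset α) (p : α → ℝ) : ℝ :=
  ∑ i ∈ B, ∑ j ∈ C, if i ⋖ j then p j - p i else 0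

open Classical in
noncomputable def mcountF (B C : Finset α) : ℝ :=
  ∑ i ∈ B, ∑ j ∈ C, if i ⋖ j then (1 : ℝ) else 0

lemma crossS_self (B : Finset α) (p : α → ℝ) : crossS B B p = alphaF B p := rfl

lemma alpha_split {B C τ : Finset α} (hd : Disjoint B C) (hun : B ∪ C = τ) (p : α → ℝ) :
    alphaF τ p = alphaF B p + crossS B C p + crossS C B p + alphaF C p := by
  subst hun
  have h1 : ∀ (S : Finset α), crossS S (B ∪ C) p = crossS S B p + crossS S C p := by
    intro S
    simp only [crossS]
    rw [← Finset.sum_add_distrib]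
    exact Finset.sum_congr rfl (fun i _ => Finset.sum_union hd)
  have h0 : crossS (B ∪ C) (B ∪ C) p = crossS B (B ∪ C) p + crossS C (B ∪ C) p := by
    simp only [crossS]
    exact Finset.sum_union hd
  rw [← crossS_self, ← crossS_self, ← crossS_self, h0, h1 B, h1 C]
  ring

lemma alpha_shift {σ : Finset α} {p q : α → ℝ} {s : ℝ} (h : ∀ i ∈ σ, p i = q i + s) :
    alphaF σ p = alphaF σ q := by
  rw [alphaF, alphaF]
  refine Finset.sum_congr rfl (fun i hi => Finset.sum_congr rfl (fun j hj => ?_))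
  split_ifs with hij
  · rw [h i hi, h j hj]; ring
  · rfl

lemma crossS_shift {B C : Finset α} {p q : α → ℝ} {s t : ℝ}
    (hB : ∀ i ∈ B, p i = q i + s) (hC' : ∀ j ∈ C, p j = q j + t) :
    crossS B C p = crossS B C q + (t - s) * mcountF B C := by
  rw [crossS, crossS, mcountF, Finset.mul_sum, ← Finset.sum_add_distrib]
  refine Finset.sum_congr rfl (fun i hi => ?_)
  rw [Finset.mul_sum, ← Finset.sum_add_distrib]
  refine Finset.sum_congr rfl (fun j hj => ?_)
  split_ifs with hij
  · rw [hB i hi, hC' j hj]; ring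
  · ring

lemma crossS_zero {B C : Finset α} (h : ∀ i ∈ B, ∀ j ∈ C, ¬ i ⋖ j) (p : α → ℝ) :
    crossS B C p = 0 := by
  rw [crossS]
  refine Finset.sum_eq_zero (fun i hi => Finset.sum_eq_zero (fun j hj => ?_))
  rw [if_neg (h i hi j hj)]

lemma mcountF_pos {B C : Finset α} (h : ∃ i ∈ B, ∃ j ∈ C, i ⋖ j) : 0 < mcountF B C := by
  classical
  obtain ⟨i0, hi0, j0, hj0, hij0⟩ := h
  have hnn : ∀ (i : α), ∀ j ∈ C, (0:ℝ) ≤ if i ⋖ j then (1:ℝ) else 0 := by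
    intro i j _
    split_ifs <;> norm_num
  have h1 : (1 : ℝ) ≤ ∑ j ∈ C, (if i0 ⋖ j then (1:ℝ) else 0) := by
    have := Finset.single_le_sum (hnn i0) hj0
    rwa [if_pos hij0] at this
  have h2 : ∑ j ∈ C, (if i0 ⋖ j then (1:ℝ) else 0) ≤ mcountF B C := by
    rw [mcountF]
    refine Finset.single_le_sum (fun i _ => Finset.sum_nonneg (hnn i)) hi0
  linarith

def Pfun (q1 q2 : α → ℝ) (B1 B2 : Finset α) (s t : ℝ) (i : α) : ℝ :=
  q1 i + q2 i + (if i ∈ B1 then s else 0) + (if i ∈ B2 then t else 0)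

lemma rec_lemma (hC : Ctx T) (hmax : ∀ T', IsProperTubing T' → T ⊆ T' → T = T')
    (c : Finset α → ℝ) :
    ∀ (n : ℕ) (τ : Finset α), τ.card ≤ n → (IsNodeT T τ ∨ ∃ x, τ = {x}) →
    ∃! p : α → ℝ, (∀ i, i ∉ τ → p i = 0) ∧ (∑ i ∈ τ, p i = 0) ∧
      (∀ σ ∈ insert Finset.univ T, σ ⊆ τ → alphaF σ p = c σ) := by
  classical
  intro n
  induction n with
  | zero =>
    intro τ hcard hkind
    exfalso
    rcases hkind with h | ⟨x, rfl⟩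
    · have := hC.node_card h; omega
    · simp at hcard
  | succ n ih =>
    intro τ hcard hkind
    rcases hkind with hτ | ⟨x, rfl⟩
    swap
    · refine ⟨fun _ => 0, ⟨fun _ _ => rfl, by simp, ?_⟩, ?_⟩
      · intro σ hσ hsub
        exfalso
        have hle := Finset.card_le_card hsub
        simp only [Finset.card_singleton] at hle
        rcases Finset.mem_insert.mp hσ with rfl | hσT
        · rw [Finset.card_univ] at hle
          have := hC.hn; omega
        · have := (hC.prop σ hσT).1.2.2; omega
      · rintro q ⟨hq1, hq2, -⟩
        funext i
        by_cases hix : i = x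
        · subst hix
          simpa using hq2
        · exact hq1 i (by simp [hix])
    · obtain ⟨B1, B2, hB1, hB2, hne12, honly, hedge, hnorev⟩ := two_blocks hC hmax hτ
      have hdisj : ∀ x ∈ B1, x ∉ B2 := blocks_disjoint hC hB1 hB2 hne12
      have hd : Disjoint B1 B2 := Finset.disjoint_left.mpr hdisj
      have hB1τ : B1 ⊆ τ := block_sub hB1
      have hB2τ : B2 ⊆ τ := block_sub hB2
      have hcover : B1 ∪ B2 = τ := by
        refine Finset.Subset.antisymm (Finset.union_subset hB1τ hB2τ) ?_
        intro w hw
        obtain ⟨Dw, hDw, hwDw⟩ := exists_block hC (τ := τ) hw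
        rcases honly Dw hDw with rfl | rfl
        · exact Finset.mem_union_left _ hwDw
        · exact Finset.mem_union_right _ hwDw
      obtain ⟨y2, hy2⟩ := block_nonempty hC hB2
      obtain ⟨y1, hy1⟩ := block_nonempty hC hB1
      have hB1ss : B1 ⊂ τ := ⟨hB1τ, fun hs => hdisj y2 (hs (hB2τ hy2)) hy2⟩
      have hB2ss : B2 ⊂ τ := ⟨hB2τ, fun hs => (hdisj y1 hy1) (hs (hB1τ hy1))⟩
      have hkind1 : IsNodeT T B1 ∨ ∃ x, B1 = {x} := by
        rcases block_cases hC hB1 with ⟨h, _⟩ | h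
        · exact Or.inl (Or.inr h)
        · exact Or.inr h
      have hkind2 : IsNodeT T B2 ∨ ∃ x, B2 = {x} := by
        rcases block_cases hC hB2 with ⟨h, _⟩ | h
        · exact Or.inl (Or.inr h)
        · exact Or.inr h
      have hcard1 : B1.card ≤ n := by
        have := Finset.card_lt_card hB1ss; omega
      have hcard2' : B2.card ≤ n := by
        have := Finset.card_lt_card hB2ss; omega
      obtain ⟨q1, ⟨hq1supp, hq1sum, hq1c⟩, hq1u⟩ := ih B1 hcard1 hkind1
      obtain ⟨q2, ⟨hq2supp, hq2sum, hq2c⟩, hq2u⟩ := ih B2 hcard2' hkind2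
      obtain ⟨M, hMdef⟩ : ∃ M : ℝ, M = mcountF B1 B2 := ⟨_, rfl⟩
      have hM : 0 < M := hMdef ▸ mcountF_pos hedge
      have hMne : M ≠ 0 := ne_of_gt hM
      obtain ⟨b1, hb1def⟩ : ∃ b : ℝ, b = (B1.card : ℝ) := ⟨_, rfl⟩
      obtain ⟨b2, hb2def⟩ : ∃ b : ℝ, b = (B2.card : ℝ) := ⟨_, rfl⟩
      have hb1 : 0 < b1 := by
        rw [hb1def]; exact_mod_cast Finset.card_pos.mpr ⟨y1, hy1⟩
      have hb2 : 0 < b2 := by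
        rw [hb2def]; exact_mod_cast Finset.card_pos.mpr ⟨y2, hy2⟩
      have hb12 : b1 + b2 ≠ 0 := by positivity
      have hP1 : ∀ s t, ∀ i ∈ B1, Pfun q1 q2 B1 B2 s t i = q1 i + s := by
        intro s t i hi
        have h2 : q2 i = 0 := hq2supp i (fun h => hdisj i hi h)
        rw [Pfun, if_pos hi, if_neg (fun h => hdisj i hi h), h2]
        ring
      have hP2 : ∀ s t, ∀ i ∈ B2, Pfun q1 q2 B1 B2 s t i = q2 i + t := by
        intro s t i hi
        have hi1 : i ∉ B1 := fun h => hdisj i h hi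
        have h1 : q1 i = 0 := hq1supp i hi1
        rw [Pfun, if_pos hi, if_neg hi1, h1]
        ring
      have hP0 : ∀ s t, ∀ i, i ∉ τ → Pfun q1 q2 B1 B2 s t i = 0 := by
        intro s t i hi
        have h1 : i ∉ B1 := fun h => hi (hB1τ h)
        have h2 : i ∉ B2 := fun h => hi (hB2τ h)
        rw [Pfun, if_neg h1, if_neg h2, hq1supp i h1, hq2supp i h2]
        ring
      have hsumP : ∀ s t, ∑ i ∈ τ, Pfun q1 q2 B1 B2 s t i = b1 * s + b2 * t := by
        intro s t
        rw [← hcover, Finset.sum_union hd]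
        have e1 : ∑ i ∈ B1, Pfun q1 q2 B1 B2 s t i = b1 * s := by
          rw [Finset.sum_congr rfl (fun i hi => hP1 s t i hi), Finset.sum_add_distrib, hq1sum,
            Finset.sum_const, nsmul_eq_mul, hb1def]
          ring
        have e2 : ∑ i ∈ B2, Pfun q1 q2 B1 B2 s t i = b2 * t := by
          rw [Finset.sum_congr rfl (fun i hi => hP2 s t i hi), Finset.sum_add_distrib, hq2sum,
            Finset.sum_const, nsmul_eq_mul, hb2def]
          ring
        rw [e1, e2]
      obtain ⟨KB, hKBdef⟩ : ∃ K : ℝ, K = alphaF B1 q1 + alphaF B2 q2 +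
        crossS B1 B2 (Pfun q1 q2 B1 B2 0 0) := ⟨_, rfl⟩
      have halphaP : ∀ s t, alphaF τ (Pfun q1 q2 B1 B2 s t) = KB + (t - s) * M := by
        intro s t
        rw [alpha_split hd hcover]
        have e1 : alphaF B1 (Pfun q1 q2 B1 B2 s t) = alphaF B1 q1 := alpha_shift (hP1 s t)
        have e2 : alphaF B2 (Pfun q1 q2 B1 B2 s t) = alphaF B2 q2 := alpha_shift (hP2 s t)
        have e3 : crossS B2 B1 (Pfun q1 q2 B1 B2 s t) = 0 := crossS_zero hnorev _
        have e4 : crossS B1 B2 (Pfun q1 q2 B1 B2 s t) =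
            crossS B1 B2 (Pfun q1 q2 B1 B2 0 0) + (t - s) * mcountF B1 B2 := by
          refine crossS_shift (fun i hi => ?_) (fun j hj => ?_)
          · rw [hP1 s t i hi, hP1 0 0 i hi]; ring
          · rw [hP2 s t j hj, hP2 0 0 j hj]; ring
        rw [e1, e2, e3, e4, hKBdef, hMdef]
        ring
      have hfrac : ∀ σ, σ ∈ insert Finset.univ T → σ ⊆ τ → σ ≠ τ → σ ⊆ B1 ∨ σ ⊆ B2 := by
        intro σ hσ hsub hne
        rcases Finset.mem_insert.mp hσ with rfl | hσT
        · exact absurd (Finset.Subset.antisymm (Finset.subset_univ τ) hsub).symm hne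
        · have hss : σ ⊂ τ := ⟨hsub, fun h => hne (Finset.Subset.antisymm hsub h)⟩
          obtain ⟨Dd, hDd, hsubd⟩ := sub_block_of_ssub hC hσT hss
          rcases honly Dd hDd with rfl | rfl
          · exact Or.inl hsubd
          · exact Or.inr hsubd
      have hsigP : ∀ s t σ, σ ∈ insert Finset.univ T → σ ⊆ τ → σ ≠ τ →
          alphaF σ (Pfun q1 q2 B1 B2 s t) = c σ := by
        intro s t σ hσ hsub hne
        rcases hfrac σ hσ hsub hne with h | h
        · rw [alpha_shift (s := s) (fun i hi => hP1 s t i (h hi))]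
          exact hq1c σ hσ h
        · rw [alpha_shift (s := t) (fun i hi => hP2 s t i (h hi))]
          exact hq2c σ hσ h
      have hτF : τ ∈ insert Finset.univ T := by
        rcases hτ with rfl | h
        · exact Finset.mem_insert_self _ _
        · exact Finset.mem_insert_of_mem h
      obtain ⟨Dv, hDvdef⟩ : ∃ d : ℝ, d = c τ - KB := ⟨_, rfl⟩
      obtain ⟨s0, hs0def⟩ : ∃ s : ℝ, s = -(Dv * b2) / (M * (b1 + b2)) := ⟨_, rfl⟩
      obtain ⟨t0, ht0def⟩ : ∃ t : ℝ, t = s0 + Dv / M := ⟨_, rfl⟩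
      have heq1 : KB + (t0 - s0) * M = c τ := by
        rw [ht0def, hDvdef]
        field_simp
        ring
      have heq0 : b1 * s0 + b2 * t0 = 0 := by
        rw [ht0def, hs0def]
        field_simp
        ring
      refine ⟨Pfun q1 q2 B1 B2 s0 t0, ⟨hP0 s0 t0, ?_, ?_⟩, ?_⟩
      · rw [hsumP]; exact heq0
      · intro σ hσ hsub
        by_cases hστ : σ = τ
        · subst hστ; rw [halphaP]; exact heq1
        · exact hsigP s0 t0 σ hσ hsub hστ
      · rintro q ⟨hqsupp, hqsum, hqc⟩
        obtain ⟨s', hs'def⟩ : ∃ s : ℝ, s = (∑ i ∈ B1, q i) / b1 := ⟨_, rfl⟩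
        obtain ⟨t', ht'def⟩ : ∃ t : ℝ, t = (∑ i ∈ B2, q i) / b2 := ⟨_, rfl⟩
        have hq1'eq : (fun i => if i ∈ B1 then q i - s' else 0) = q1 := by
          refine hq1u _ ⟨?_, ?_, ?_⟩
          · intro i hi; exact if_neg hi
          · rw [Finset.sum_congr rfl (fun i (hi : i ∈ B1) => if_pos hi), Finset.sum_sub_distrib,
              Finset.sum_const, nsmul_eq_mul, hs'def]
            have : (B1.card : ℝ) = b1 := hb1def.symm
            rw [this]
            field_simp
            ring
          · intro σ hσ hsub
            have heqa : alphaF σ (fun i => if i ∈ B1 then q i - s' else 0) = alphaF σ q := by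
              refine alpha_shift (s := -s') (fun i hi => ?_)
              rw [if_pos (hsub hi)]; ring
            rw [heqa]
            exact hqc σ hσ (hsub.trans hB1τ)
        have hq2'eq : (fun i => if i ∈ B2 then q i - t' else 0) = q2 := by
          refine hq2u _ ⟨?_, ?_, ?_⟩
          · intro i hi; exact if_neg hi
          · rw [Finset.sum_congr rfl (fun i (hi : i ∈ B2) => if_pos hi), Finset.sum_sub_distrib,
              Finset.sum_const, nsmul_eq_mul, ht'def]
            have : (B2.card : ℝ) = b2 := hb2def.symm
            rw [this]
            field_simp
            ring
          · intro σ hσ hsub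
            have heqa : alphaF σ (fun i => if i ∈ B2 then q i - t' else 0) = alphaF σ q := by
              refine alpha_shift (s := -t') (fun i hi => ?_)
              rw [if_pos (hsub hi)]; ring
            rw [heqa]
            exact hqc σ hσ (hsub.trans hB2τ)
        have hqB1 : ∀ i ∈ B1, q i = q1 i + s' := by
          intro i hi
          have h := congrFun hq1'eq i
          rw [if_pos hi] at h
          linarith [h.symm.le, h.le]
        have hqB2 : ∀ i ∈ B2, q i = q2 i + t' := by
          intro i hi
          have h := congrFun hq2'eq i
          rw [if_pos hi] at h
          linarith [h.symm.le, h.le]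
        have hqeq : q = Pfun q1 q2 B1 B2 s' t' := by
          funext i
          by_cases h1 : i ∈ B1
          · rw [hP1 s' t' i h1, hqB1 i h1]
          by_cases h2 : i ∈ B2
          · rw [hP2 s' t' i h2, hqB2 i h2]
          have hiτ : i ∉ τ := by rw [← hcover]; simp [h1, h2]
          rw [hqsupp i hiτ, hP0 s' t' i hiτ]
        have heqA : b1 * s' + b2 * t' = 0 := by
          rw [← hsumP s' t', ← hqeq]; exact hqsum
        have heqB : KB + (t' - s') * M = c τ := by
          rw [← halphaP s' t', ← hqeq]
          exact hqc τ hτF subset_rfl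
        have htsM : (t' - s') * M = Dv := by
          rw [hDvdef]; linarith
        have hts' : t' - s' = Dv / M := by
          rw [eq_div_iff hMne]; exact htsM
        have ht'' : t' = s' + Dv / M := by linarith [hts']
        have hsv : s' * (b1 + b2) = -(b2 * (Dv / M)) := by
          rw [ht''] at heqA
          linear_combination heqA
        have hsv0 : s0 * (b1 + b2) = -(b2 * (Dv / M)) := by
          rw [hs0def]
          field_simp
        have hss' : s' = s0 := mul_right_cancel₀ hb12 (hsv.trans hsv0.symm)
        have htt' : t' = t0 := by rw [ht0def, ← hss']; exact ht''
        rw [hqeq, hss', htt']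
end Tubing
end VtxAux


/-- for a maximal proper tubing `T`, the intersection of the
hyperplanes `H_τ`, `τ ∈ T ∪ {P}`, is a single point of `ℝ^P_{Σ=0}`. -/
theorem vertex_lemma {α : Type*} [Fintype α] [PartialOrder α] [DecidableEq α]
    (hconn : IsConnectedIn (Finset.univ : Finset α)) (hn : 2 ≤ Fintype.card α)
    (T : Finset (Finset α)) (hT : IsMaximalTubing T) :
    ∃! p : α → ℝ, (∑ i, p i = 0) ∧
      ∀ τ ∈ insert Finset.univ T, alphaF τ p = (Fintype.card α : ℝ) ^ (2 * τ.card) := by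
  have hC : VtxAux.Ctx T := ⟨hT.1.1, hT.1.2.1, hT.1.2.2, hconn, hn⟩
  obtain ⟨p, ⟨hsupp, hsum, hcon⟩, huniq⟩ :=
    VtxAux.rec_lemma hC hT.2 (fun σ => (Fintype.card α : ℝ) ^ (2 * σ.card))
      (Finset.univ : Finset α).card Finset.univ le_rfl (Or.inl (Or.inl rfl))
  refine ⟨p, ⟨hsum, fun τ hτ => hcon τ hτ (Finset.subset_univ τ)⟩, ?_⟩
  rintro q ⟨hqs, hqc⟩
  exact huniq q ⟨fun i hi => absurd (Finset.mem_univ i) hi, hqs, fun σ hσ _ => hqc σ hσ⟩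
end

section
/- Let P be a finite connected poset, T a maximal proper tubing, τ ∉ T a proper tube, and σ = conv_T(τ) the minimal tube in T ∪ {P} containing τ. Then T partitions σ into a lower set A and an upper set B (each a tube of T, a singleton, or a union prescribed by T) such that both A and B intersect τ. -/
open Finset

section Aux

open Relation List

variable {β : Type*} {Q : β → β → Prop}

lemma chain_nil' {a : β} : List.Chain Q a [] := List.IsChain.singleton a

lemma chain_cons' {a b : β} {l : List β} :
    List.Chain Q a (b :: l) ↔ Q a b ∧ List.Chain Q b l := by
  unfold List.Chain; exact List.isChain_cons_cons

lemma chain_singleton' {a b : β} : List.Chain Q a [b] ↔ Q a b := by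
  rw [chain_cons']; exact ⟨fun h => h.1, fun h => ⟨h, chain_nil'⟩⟩

lemma chain_split' {a b : β} {l₁ l₂ : List β} :
    List.Chain Q a (l₁ ++ b :: l₂) ↔ List.Chain Q a (l₁ ++ [b]) ∧ List.Chain Q b l₂ := by
  induction l₁ generalizing a with
  | nil => simp only [List.nil_append, chain_cons', chain_nil', and_true]
  | cons c l ih => simp only [List.cons_append, chain_cons', ih, and_assoc]

lemma chain_snoc {a b c : β} {l : List β} (h : List.Chain Q a (l ++ [b])) (hbc : Q b c) :
    List.Chain Q a ((l ++ [b]) ++ [c]) := by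
  have : List.Chain Q a (l ++ b :: [c]) := by
    rw [chain_split']
    exact ⟨h, chain_singleton'.2 hbc⟩
  simpa using this

lemma chain_of_transGen {a b : β} (h : Relation.TransGen Q a b) :
    ∃ l : List β, List.Chain Q a (l ++ [b]) := by
  induction h with
  | single h => exact ⟨[], chain_singleton'.2 h⟩
  | tail _ h ih =>
      obtain ⟨l, hl⟩ := ih
      exact ⟨_, chain_snoc hl h⟩

lemma transGen_of_chain : ∀ (l : List β) (a b : β), List.Chain Q a (l ++ [b]) →
    Relation.TransGen Q a b := by
  intro l
  induction l with
  | nil => intro a b h; exact Relation.TransGen.single (chain_singleton'.1 h)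
  | cons c l ih =>
      intro a b h
      rw [List.cons_append, chain_cons'] at h
      exact Relation.TransGen.head h.1 (ih c b h.2)

lemma reflTransGen_of_chain (l : List β) (a b : β) (h : List.Chain Q a (l ++ [b])) :
    Relation.ReflTransGen Q a b :=
  (transGen_of_chain l a b h).to_reflTransGen

lemma rotate_cycle {a y : β} {l : List β} (h : List.Chain Q a (l ++ [a])) (hy : y ∈ l) :
    ∃ l' : List β, l'.length = l.length ∧ List.Chain Q y (l' ++ [y]) ∧
      ∀ u ∈ y :: l', u ∈ a :: l := by
  obtain ⟨l₁, l₂, rfl⟩ := List.append_of_mem hy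
  have h' : List.Chain Q a (l₁ ++ y :: (l₂ ++ [a])) := by simpa using h
  rw [chain_split'] at h'
  refine ⟨l₂ ++ a :: l₁, by simp; omega, ?_, ?_⟩
  · have : List.Chain Q y (l₂ ++ a :: (l₁ ++ [y])) := by
      rw [chain_split']
      exact ⟨h'.2, h'.1⟩
    simpa using this
  · intro u hu
    simp only [List.mem_cons, List.mem_append] at hu ⊢
    tauto

lemma rtg_lift {γ : Type*} {Q' : γ → γ → Prop} (f : β → γ)
    (hf : ∀ x y, Q x y → Relation.ReflTransGen Q' (f x) (f y)) {a b : β}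
    (h : Relation.ReflTransGen Q a b) : Relation.ReflTransGen Q' (f a) (f b) := by
  induction h with
  | refl => exact Relation.ReflTransGen.refl
  | tail _ h ih => exact ih.trans (hf _ _ h)

lemma rtg_symm (hs : ∀ x y, Q x y → Q y x) {a b : β}
    (h : Relation.ReflTransGen Q a b) : Relation.ReflTransGen Q b a := by
  induction h with
  | refl => exact Relation.ReflTransGen.refl
  | tail _ h ih => exact (Relation.ReflTransGen.single (hs _ _ h)).trans ih

lemma chain_mem_target : ∀ (l : List β) (a : β), List.Chain Q a l →
    ∀ b ∈ l, ∃ c, Q c b := by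
  intro l
  induction l with
  | nil => intro a _ b hb; simp at hb
  | cons d m ih =>
      intro a h b hb
      rw [chain_cons'] at h
      rcases List.mem_cons.1 hb with rfl | hb
      · exact ⟨a, h.1⟩
      · exact ih d h.2 b hb

lemma chain_imp_mem {Q' : β → β → Prop} : ∀ (l : List β) (a : β), List.Chain Q a l →
    (∀ x y, x ∈ a :: l → y ∈ a :: l → Q x y → Q' x y) → List.Chain Q' a l := by
  intro l
  induction l with
  | nil => intro _ _ _; exact chain_nil'
  | cons d m ih =>
      intro a h himp
      rw [chain_cons'] at h ⊢
      refine ⟨himp _ _ (by simp) (by simp) h.1, ih d h.2 ?_⟩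
      intro x y hx hy
      exact himp x y (by simp at hx ⊢; tauto) (by simp at hy ⊢; tauto)

end Aux

section Blocks
set_option linter.unusedSectionVars false

variable {α : Type*} [Fintype α] [PartialOrder α] [DecidableEq α]

/-- The block of `x`: the largest tube of `T` strictly inside `σ` containing `x`,
or `{x}` if none. -/
def blkB (T : Finset (Finset α)) (σ : Finset α) (x : α) : Finset α :=
  insert x ((T.filter fun t => t ⊂ σ ∧ x ∈ t).sup id)

variable {T : Finset (Finset α)} {σ : Finset α}

lemma mem_blkB (x : α) : x ∈ blkB T σ x := Finset.mem_insert_self _ _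

lemma subset_blkB {t : Finset α} {x : α} (ht : t ∈ T) (hts : t ⊂ σ) (hx : x ∈ t) :
    t ⊆ blkB T σ x :=
  (Finset.le_sup (f := id) (Finset.mem_filter.2 ⟨ht, hts, hx⟩)).trans
    (Finset.subset_insert _ _)

lemma blkB_subset {x : α} (hx : x ∈ σ) : blkB T σ x ⊆ σ := by
  apply Finset.insert_subset hx
  intro z hz
  rw [Finset.mem_sup] at hz
  obtain ⟨t, ht, hzt⟩ := hz
  exact (Finset.mem_filter.1 ht).2.1.subset hzt

lemma blkB_cases (hPT : IsProperTubing T) (x : α) :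
    blkB T σ x = {x} ∨ (blkB T σ x ∈ T ∧ blkB T σ x ⊂ σ) := by
  set F := T.filter fun t => t ⊂ σ ∧ x ∈ t with hF
  rcases F.eq_empty_or_nonempty with he | hne
  · left; simp [blkB, ← hF, he]
  · right
    obtain ⟨t, htF, hmax⟩ := F.exists_maximal hne
    obtain ⟨htT, hts, hxt⟩ : t ∈ T ∧ t ⊂ σ ∧ x ∈ t := by
      simpa [hF, Finset.mem_filter] using htF
    have hall : ∀ s ∈ F, s ⊆ t := by
      intro s hsF
      obtain ⟨hsT, hss, hxs⟩ : s ∈ T ∧ s ⊂ σ ∧ x ∈ s := by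
        simpa [hF, Finset.mem_filter] using hsF
      rcases hPT.2.1 s hsT t htT with h | h | h
      · exact h
      · rcases eq_or_ne t s with rfl | hne'
        · exact subset_rfl
        · exact absurd (le_antisymm h (hmax hsF h)) hne'
      · exact absurd hxt (h x hxs)
    have hsup : F.sup id = t :=
      le_antisymm (Finset.sup_le fun s hs => hall s hs) (Finset.le_sup (f := id) htF)
    have : blkB T σ x = t := by
      rw [blkB, ← hF, hsup, Finset.insert_eq_self.2 hxt]
    rw [this]; exact ⟨htT, hts⟩

lemma blkB_card2 (hPT : IsProperTubing T) {x : α} (h : blkB T σ x ∈ T) :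
    2 ≤ (blkB T σ x).card := (hPT.1 _ h).1.2.2

lemma blkB_eq_of_mem (hPT : IsProperTubing T) {x y : α} (hx : x ∈ σ)
    (hy : y ∈ blkB T σ x) : blkB T σ y = blkB T σ x := by
  rcases blkB_cases (σ := σ) hPT x with h | ⟨hT', hss⟩
  · rw [h] at hy; rw [Finset.mem_singleton] at hy; rw [hy]
  · have h1 : blkB T σ x ⊆ blkB T σ y := subset_blkB hT' hss hy
    have hx' : x ∈ blkB T σ y := h1 (mem_blkB x)
    rcases blkB_cases (σ := σ) hPT y with h2 | ⟨hT2, hss2⟩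
    · exfalso
      have := Finset.card_le_card (h2 ▸ h1)
      simp at this
      have := blkB_card2 (σ := σ) hPT hT'
      omega
    · exact le_antisymm (subset_blkB hT2 hss2 hx') h1

lemma blkB_eq_blkB (hPT : IsProperTubing T) {x y z : α} (hx : x ∈ σ) (hy : y ∈ σ)
    (hzx : z ∈ blkB T σ x) (hzy : z ∈ blkB T σ y) : blkB T σ x = blkB T σ y := by
  rw [← blkB_eq_of_mem hPT hx hzx, ← blkB_eq_of_mem hPT hy hzy]

lemma blkB_convex (hPT : IsProperTubing T) (x : α) : IsConvexIn (blkB T σ x) := by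
  rcases blkB_cases (σ := σ) hPT x with h | ⟨hT', _⟩
  · rw [h]
    intro a ha c hc b hab hbc
    simp only [Finset.mem_singleton] at ha hc ⊢
    subst ha; subst hc
    exact le_antisymm hbc hab
  · exact (hPT.1 _ hT').1.2.1

lemma blkB_conn (hPT : IsProperTubing T) (x : α) : IsConnectedIn (blkB T σ x) := by
  rcases blkB_cases (σ := σ) hPT x with h | ⟨hT', _⟩
  · rw [h]
    intro a ha b hb
    simp only [Finset.mem_singleton] at ha hb
    subst ha; subst hb
    exact Relation.ReflTransGen.refl
  · exact (hPT.1 _ hT').1.1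

/-- The relation on blocks of `σ`. -/
def RB (T : Finset (Finset α)) (σ : Finset α) (C D : Finset α) : Prop :=
  (∃ x ∈ σ, blkB T σ x = C) ∧ (∃ y ∈ σ, blkB T σ y = D) ∧ C ≠ D ∧
    ∃ a ∈ C, ∃ b ∈ D, a < b

lemma RB_of_lt (hPT : IsProperTubing T) {u v : α} (hu : u ∈ σ) (hv : v ∈ σ)
    (huv : u < v) (hne : blkB T σ u ≠ blkB T σ v) : RB T σ (blkB T σ u) (blkB T σ v) :=
  ⟨⟨u, hu, rfl⟩, ⟨v, hv, rfl⟩, hne, u, mem_blkB u, v, mem_blkB v, huv⟩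

end Blocks

section Acycl
set_option linter.unusedSectionVars false

variable {α : Type*} [Fintype α] [PartialOrder α] [DecidableEq α]
variable {T : Finset (Finset α)} {σ : Finset α}

lemma RB_compress (hPT : IsProperTubing T) {G F : Finset α} {y : α}
    (h1 : RB T σ G {y}) (h2 : RB T σ {y} F) : RB T σ G F := by
  obtain ⟨hGb, hyb, hGne, a, haG, b, hb, hab⟩ := h1
  obtain ⟨-, hFb, hyne, b', hb', c, hcF, hbc⟩ := h2
  rw [Finset.mem_singleton] at hb hb'
  have hay : a < y := by rw [← hb]; exact hab
  have hyc : y < c := by rw [← hb']; exact hbc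
  have hac : a < c := lt_trans hay hyc
  by_cases hGF : G = F
  · exfalso
    subst hGF
    obtain ⟨xF, hxF, hFeq⟩ := hFb
    have hyF : y ∈ G := by
      rw [← hFeq] at haG hcF ⊢
      exact blkB_convex hPT xF a haG c hcF y hay.le hyc.le
    obtain ⟨xy, hxy, hyeq⟩ := hyb
    have hyσ : y ∈ σ := by
      have : y ∈ blkB T σ xy := by rw [hyeq]; exact Finset.mem_singleton_self _
      exact blkB_subset hxy this
    have e1 : blkB T σ y = G := by
      rw [← hFeq]
      exact blkB_eq_of_mem hPT hxF (by rw [hFeq]; exact hyF)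
    have e2 : blkB T σ y = ({y} : Finset α) := by
      rw [← hyeq]
      exact blkB_eq_of_mem hPT hxy (by rw [hyeq]; exact Finset.mem_singleton_self _)
    exact hyne (by rw [← e2, e1])
  · exact ⟨hGb, hFb, hGF, a, haG, c, hcF, hac⟩

lemma acyclRB (hPT : IsProperTubing T) : ∀ C, ¬ Relation.TransGen (RB T σ) C C := by
  intro C hC
  obtain ⟨l, hl⟩ := chain_of_transGen hC
  suffices H : ∀ n (C : Finset α) (l : List (Finset α)), l.length = n →
      List.Chain (RB T σ) C (l ++ [C]) → False from H l.length C l rfl hl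
  intro n
  induction n using Nat.strong_induction_on with
  | _ n ih =>
  intro C l hlen hch
  have hblock : ∀ u ∈ C :: l, ∃ x ∈ σ, blkB T σ x = u := by
    intro u hu
    rcases List.mem_cons.1 hu with rfl | hu
    · obtain ⟨c, hc⟩ := chain_mem_target _ _ hch _ (by simp : u ∈ l ++ [u])
      exact hc.2.1
    · obtain ⟨c, hc⟩ := chain_mem_target _ _ hch _ (by simp [hu] : u ∈ l ++ [C])
      exact hc.2.1
  by_cases hsing : ∃ s ∈ C :: l, s.card = 1
  · obtain ⟨s, hs, hcard⟩ := hsing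
    obtain ⟨l', hlen', hch', -⟩ : ∃ l', l'.length = l.length ∧
        List.Chain (RB T σ) s (l' ++ [s]) ∧ ∀ u ∈ s :: l', u ∈ C :: l := by
      rcases List.mem_cons.1 hs with rfl | hs
      · exact ⟨l, rfl, hch, fun u hu => hu⟩
      · obtain ⟨l', h1, h2, h3⟩ := rotate_cycle hch hs
        exact ⟨l', h1, h2, h3⟩
    obtain ⟨y, rfl⟩ := Finset.card_eq_one.1 hcard
    cases l' with
    | nil =>
        rw [List.nil_append, chain_singleton'] at hch'
        exact hch'.2.2.1 rfl
    | cons F m =>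
        rw [List.cons_append, chain_cons'] at hch'
        obtain ⟨hCF, hch2⟩ := hch'
        rcases List.eq_nil_or_concat m with rfl | ⟨m', G, rfl⟩
        · rw [List.nil_append, chain_singleton'] at hch2
          exact (RB_compress hPT hch2 hCF).2.2.1 rfl
        · have hch3 : List.Chain (RB T σ) F (m' ++ G :: [{y}]) := by simpa using hch2
          rw [chain_split'] at hch3
          obtain ⟨hchFG, hGy⟩ := hch3
          rw [chain_singleton'] at hGy
          have hGF : RB T σ G F := RB_compress hPT hGy hCF
          have hnew : List.Chain (RB T σ) F ((m' ++ [G]) ++ [F]) := chain_snoc hchFG hGF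
          have hlt : (m' ++ [G]).length < n := by
            rw [← hlen, ← hlen']
            simp [List.concat_eq_append]
          exact ih _ hlt F (m' ++ [G]) rfl hnew
  · push_neg at hsing
    have hT' : ∀ u ∈ C :: l, u ∈ T := by
      intro u hu
      obtain ⟨x, hx, hxu⟩ := hblock u hu
      rcases blkB_cases (σ := σ) hPT x with h | h
      · exact absurd (by rw [← hxu, h]; simp) (hsing u hu)
      · rw [← hxu]; exact h.1
    have hchain' : List.Chain (TubingRel T) C (l ++ [C]) := by
      apply chain_imp_mem _ _ hch
      intro x y hx hy hrb
      have hx' : x ∈ C :: l := by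
        simp only [List.mem_cons, List.mem_append, List.mem_singleton] at hx ⊢; tauto
      have hy' : y ∈ C :: l := by
        simp only [List.mem_cons, List.mem_append, List.mem_singleton] at hy ⊢; tauto
      obtain ⟨⟨xx, hxx, hxxe⟩, ⟨yy, hyy, hyye⟩, hne, a, ha, b, hb, hab⟩ := hrb
      refine ⟨hT' x hx', hT' y hy', ?_, a, ha, b, hb, hab⟩
      intro z hzx hzy
      apply hne
      rw [← hxxe] at hzx
      rw [← hyye] at hzy
      rw [← hxxe, ← hyye]
      exact blkB_eq_blkB hPT hxx hyy hzx hzy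
    exact hPT.2.2 C (hT' C (by simp)) (transGen_of_chain _ _ _ hchain')

lemma cov_reach (v : α) : ∀ a, a ≤ v →
    Relation.ReflTransGen (fun x y => x ⋖ y ∧ y ≤ v) a v := by
  classical
  have wf := (Finite.to_wellFoundedGT (α := α)).wf
  intro a
  refine wf.induction (C := fun a => a ≤ v →
    Relation.ReflTransGen (fun x y => x ⋖ y ∧ y ≤ v) a v) a ?_
  intro x IH hxv
  rcases eq_or_lt_of_le hxv with rfl | hlt
  · exact Relation.ReflTransGen.refl
  · obtain ⟨c, hc, hmin⟩ := (Finset.univ.filter fun z => x < z ∧ z ≤ v).exists_minimal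
      ⟨v, by simp [hlt]⟩
    simp only [Finset.mem_filter, Finset.mem_univ, true_and] at hc hmin
    have hcov : x ⋖ c := ⟨hc.1, fun z hz1 hz2 => hz2.not_ge (hmin ⟨hz1, hz2.le.trans hc.2⟩ hz2.le)⟩
    exact Relation.ReflTransGen.head ⟨hcov, hc.2⟩ (IH c hc.1 hc.2)

lemma mono_blkB (hPT : IsProperTubing T) (hconv : IsConvexIn σ) {u v : α}
    (hu : u ∈ σ) (hv : v ∈ σ) (huv : u ≤ v) :
    Relation.ReflTransGen (RB T σ) (blkB T σ u) (blkB T σ v) := by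
  have h := cov_reach v u huv
  clear huv
  induction h using Relation.ReflTransGen.head_induction_on with
  | refl => exact Relation.ReflTransGen.refl
  | head h1 h2 ih =>
      rename_i x y
      have hyσ : y ∈ σ := hconv x hu v hv y h1.1.le h1.2
      rcases eq_or_ne (blkB T σ x) (blkB T σ y) with he | hne
      · rw [he]; exact ih hyσ
      · exact Relation.ReflTransGen.head (RB_of_lt hPT hu hyσ h1.1.lt hne) (ih hyσ)

lemma exists_RB_pair (hPT : IsProperTubing T) (hconnσ : IsConnectedIn σ) {x y : α}
    (hx : x ∈ σ) (hy : y ∈ σ) (hne : blkB T σ x ≠ blkB T σ y) :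
    ∃ C D, RB T σ C D := by
  suffices H : ∀ z, Relation.ReflTransGen
      (fun u v => u ∈ σ ∧ v ∈ σ ∧ (u ⋖ v ∨ v ⋖ u)) z y →
      blkB T σ z = blkB T σ y ∨ ∃ C D, RB T σ C D by
    rcases H x (hconnσ x hx y hy) with h | h
    · exact absurd h hne
    · exact h
  intro z h
  induction h using Relation.ReflTransGen.head_induction_on with
  | refl => exact Or.inl rfl
  | head h1 h2 ih =>
      rename_i z w
      obtain ⟨hzσ, hwσ, hcov⟩ := h1
      rcases ih with heq | hex
      · rcases eq_or_ne (blkB T σ z) (blkB T σ w) with he | hne'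
        · exact Or.inl (he.trans heq)
        · rcases hcov with hc | hc
          · exact Or.inr ⟨_, _, RB_of_lt hPT hzσ hwσ hc.lt hne'⟩
          · exact Or.inr ⟨_, _, RB_of_lt hPT hwσ hzσ hc.lt hne'.symm⟩
      · exact Or.inr hex

lemma exists_cover_pair (hPT : IsProperTubing T) (hconnσ : IsConnectedIn σ) {x y : α}
    (hx : x ∈ σ) (hy : y ∈ σ) (hne : blkB T σ x ≠ blkB T σ y) :
    ∃ X Y, RB T σ X Y ∧ ∀ E, (∃ w ∈ σ, blkB T σ w = E) →
      Relation.ReflTransGen (RB T σ) X E →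
      Relation.ReflTransGen (RB T σ) E Y → E = X ∨ E = Y := by
  classical
  obtain ⟨C, D, hCD⟩ := exists_RB_pair hPT hconnσ hx hy hne
  set Blks := σ.image (blkB T σ) with hBlks
  set pairs := (Blks ×ˢ Blks).filter (fun p => RB T σ p.1 p.2) with hpairsdef
  have hmemB : ∀ {E : Finset α}, (∃ w ∈ σ, blkB T σ w = E) → E ∈ Blks := by
    rintro E ⟨w, hw, hwe⟩
    exact Finset.mem_image.2 ⟨w, hw, hwe⟩
  have hpairs_ne : pairs.Nonempty := by
    refine ⟨(C, D), Finset.mem_filter.2 ⟨Finset.mem_product.2 ⟨?_, ?_⟩, hCD⟩⟩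
    · exact hmemB hCD.1
    · exact hmemB hCD.2.1
  set I : Finset α × Finset α → Finset (Finset α) := fun p =>
    Blks.filter fun E => Relation.ReflTransGen (RB T σ) p.1 E ∧
      Relation.ReflTransGen (RB T σ) E p.2 with hI
  obtain ⟨p, hp, hpmin⟩ := pairs.exists_min_image (fun p => (I p).card) hpairs_ne
  have hpRB : RB T σ p.1 p.2 := (Finset.mem_filter.1 hp).2
  refine ⟨p.1, p.2, hpRB, ?_⟩
  intro E hEbl hXE hEY
  by_contra hcon
  push_neg at hcon
  obtain ⟨hEX, hEY'⟩ := hcon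
  rcases Relation.ReflTransGen.cases_head hXE with he | ⟨G, hXG, hGE⟩
  · exact hEX he.symm
  · have hGpairs : (p.1, G) ∈ pairs := by
      refine Finset.mem_filter.2 ⟨Finset.mem_product.2 ⟨?_, ?_⟩, hXG⟩
      · exact hmemB hXG.1
      · exact hmemB hXG.2.1
    have hsub : I (p.1, G) ⊆ I p := by
      intro F hF
      obtain ⟨hFB, hXF, hFG⟩ := Finset.mem_filter.1 hF
      exact Finset.mem_filter.2 ⟨hFB, hXF, hFG.trans (hGE.trans hEY)⟩
    have hY_in : p.2 ∈ I p := Finset.mem_filter.2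
      ⟨hmemB hpRB.2.1, Relation.ReflTransGen.single hpRB, Relation.ReflTransGen.refl⟩
    have hY_notin : p.2 ∉ I (p.1, G) := by
      intro hmem
      obtain ⟨-, -, hYG⟩ := Finset.mem_filter.1 hmem
      have h1 : Relation.TransGen (RB T σ) E p.2 := by
        rcases Relation.reflTransGen_iff_eq_or_transGen.1 hEY with he2 | ht
        · exact absurd he2.symm hEY'
        · exact ht
      have h2 : Relation.ReflTransGen (RB T σ) p.2 E := hYG.trans hGE
      exact acyclRB hPT E (h1.trans_left h2)
    have hss : I (p.1, G) ⊂ I p :=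
      (Finset.ssubset_iff_of_subset hsub).2 ⟨p.2, hY_in, hY_notin⟩
    exact absurd (Finset.card_lt_card hss) (not_lt.2 (hpmin (p.1, G) hGpairs))

end Acycl

section TwoBlocks
set_option linter.unusedSectionVars false

open Relation

variable {α : Type*} [Fintype α] [PartialOrder α] [DecidableEq α]

lemma two_blocks (hconn : IsConnectedIn (Finset.univ : Finset α))
    {T : Finset (Finset α)} (hT : IsMaximalTubing T)
    {σ : Finset α} (hσ : σ ∈ insert Finset.univ T)
    {x y : α} (hx : x ∈ σ) (hy : y ∈ σ) (hne : blkB T σ x ≠ blkB T σ y) :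
    ∀ z ∈ σ, blkB T σ z = blkB T σ x ∨ blkB T σ z = blkB T σ y := by
  classical
  have hPT : IsProperTubing T := hT.1
  have hσconv : IsConvexIn σ := by
    rcases Finset.mem_insert.1 hσ with rfl | hσT
    · intro a _ c _ b _ _; exact Finset.mem_univ b
    · exact (hPT.1 σ hσT).1.2.1
  have hσconn : IsConnectedIn σ := by
    rcases Finset.mem_insert.1 hσ with rfl | hσT
    · exact hconn
    · exact (hPT.1 σ hσT).1.1
  by_contra hcon
  push_neg at hcon
  obtain ⟨z, hz, hzx, hzy⟩ := hcon
  -- the quotient cover pair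
  obtain ⟨X, Y, hXY, hcov⟩ := exists_cover_pair hPT hσconn hx hy hne
  obtain ⟨⟨wX, hwX, hwXe⟩, ⟨wY, hwY, hwYe⟩, hXYne, a0, ha0X, b0, hb0Y, hab0⟩ := hXY
  have hXY' : RB T σ X Y :=
    ⟨⟨wX, hwX, hwXe⟩, ⟨wY, hwY, hwYe⟩, hXYne, a0, ha0X, b0, hb0Y, hab0⟩
  have hXsub : X ⊆ σ := by rw [← hwXe]; exact blkB_subset hwX
  have hYsub : Y ⊆ σ := by rw [← hwYe]; exact blkB_subset hwY
  have hblkX : ∀ a ∈ X, blkB T σ a = X := by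
    intro a ha
    rw [← hwXe] at ha ⊢; exact blkB_eq_of_mem hPT hwX ha
  have hblkY : ∀ a ∈ Y, blkB T σ a = Y := by
    intro a ha
    rw [← hwYe] at ha ⊢; exact blkB_eq_of_mem hPT hwY ha
  have hdisjXY : ∀ u, u ∈ X → u ∈ Y → False := by
    intro u hu1 hu2
    exact hXYne (by rw [← hblkX u hu1, hblkY u hu2])
  set ρ : Finset α := X ∪ Y with hρdef
  have hρsub : ρ ⊆ σ := Finset.union_subset hXsub hYsub
  have hblkρ : ∀ a ∈ ρ, blkB T σ a = X ∨ blkB T σ a = Y := by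
    intro a ha
    rcases Finset.mem_union.1 ha with h | h
    · exact Or.inl (hblkX a h)
    · exact Or.inr (hblkY a h)
  have hXq : ∀ W, (W = X ∨ W = Y) → Relation.ReflTransGen (RB T σ) X W := by
    rintro W (rfl | rfl)
    · exact Relation.ReflTransGen.refl
    · exact Relation.ReflTransGen.single hXY'
  have hqY : ∀ W, (W = X ∨ W = Y) → Relation.ReflTransGen (RB T σ) W Y := by
    rintro W (rfl | rfl)
    · exact Relation.ReflTransGen.single hXY'
    · exact Relation.ReflTransGen.refl
  have hcov' : ∀ b ∈ σ, Relation.ReflTransGen (RB T σ) X (blkB T σ b) →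
      Relation.ReflTransGen (RB T σ) (blkB T σ b) Y → b ∈ ρ := by
    intro b hb h1 h2
    rcases hcov (blkB T σ b) ⟨b, hb, rfl⟩ h1 h2 with h | h
    · exact Finset.mem_union.2 (Or.inl (h ▸ mem_blkB b))
    · exact Finset.mem_union.2 (Or.inr (h ▸ mem_blkB b))
  -- convexity of ρ
  have hρconv : IsConvexIn ρ := by
    intro a ha c hc b hab hbc
    have haσ : a ∈ σ := hρsub ha
    have hcσ : c ∈ σ := hρsub hc
    have hbσ : b ∈ σ := hσconv a haσ c hcσ b hab hbc
    refine hcov' b hbσ ?_ ?_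
    · exact (hXq _ (hblkρ a ha)).trans (mono_blkB hPT hσconv haσ hbσ hab)
    · exact (mono_blkB hPT hσconv hbσ hcσ hbc).trans (hqY _ (hblkρ c hc))
  -- connectivity of ρ
  have hb0σ : b0 ∈ σ := hYsub hb0Y
  have hbridge : Relation.ReflTransGen
      (fun u v => u ∈ ρ ∧ v ∈ ρ ∧ (u ⋖ v ∨ v ⋖ u)) a0 b0 := by
    have hreach := cov_reach b0 a0 hab0.le
    have KEY : ∀ w, Relation.ReflTransGen (fun p q => p ⋖ q ∧ q ≤ b0) w b0 →
        w ∈ σ → w ≤ b0 → Relation.ReflTransGen (RB T σ) X (blkB T σ w) →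
        Relation.ReflTransGen (fun u v => u ∈ ρ ∧ v ∈ ρ ∧ (u ⋖ v ∨ v ⋖ u)) w b0 := by
      intro w hw
      induction hw using Relation.ReflTransGen.head_induction_on with
      | refl => intro _ _ _; exact Relation.ReflTransGen.refl
      | head h1 h2 ih =>
          rename_i p q
          intro hpσ hpb hXp
          have hqσ : q ∈ σ := hσconv p hpσ b0 hb0σ q h1.1.le h1.2
          have hXq' : Relation.ReflTransGen (RB T σ) X (blkB T σ q) := by
            rcases eq_or_ne (blkB T σ p) (blkB T σ q) with he | hne'
            · rw [← he]; exact hXp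
            · exact hXp.tail (RB_of_lt hPT hpσ hqσ h1.1.lt hne')
          have hpρ : p ∈ ρ := by
            refine hcov' p hpσ hXp ?_
            have := mono_blkB hPT hσconv hpσ hb0σ hpb
            rwa [hblkY b0 hb0Y] at this
          have hqρ : q ∈ ρ := by
            refine hcov' q hqσ hXq' ?_
            have := mono_blkB hPT hσconv hqσ hb0σ h1.2
            rwa [hblkY b0 hb0Y] at this
          exact Relation.ReflTransGen.head ⟨hpρ, hqρ, Or.inl h1.1⟩ (ih hqσ h1.2 hXq')
    refine KEY a0 hreach (hXsub ha0X) hab0.le ?_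
    rw [hblkX a0 ha0X]
  have hρconn : IsConnectedIn ρ := by
    have hXpath : ∀ p ∈ X, ∀ q ∈ X, Relation.ReflTransGen
        (fun u v => u ∈ ρ ∧ v ∈ ρ ∧ (u ⋖ v ∨ v ⋖ u)) p q := by
      intro p hp q hq
      have h := blkB_conn (σ := σ) hPT wX p (by rw [hwXe]; exact hp) q (by rw [hwXe]; exact hq)
      refine Relation.ReflTransGen.mono ?_ _ _ h
      rintro u v ⟨h1, h2, h3⟩
      rw [hwXe] at h1 h2
      exact ⟨Finset.mem_union.2 (Or.inl h1), Finset.mem_union.2 (Or.inl h2), h3⟩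
    have hYpath : ∀ p ∈ Y, ∀ q ∈ Y, Relation.ReflTransGen
        (fun u v => u ∈ ρ ∧ v ∈ ρ ∧ (u ⋖ v ∨ v ⋖ u)) p q := by
      intro p hp q hq
      have h := blkB_conn (σ := σ) hPT wY p (by rw [hwYe]; exact hp) q (by rw [hwYe]; exact hq)
      refine Relation.ReflTransGen.mono ?_ _ _ h
      rintro u v ⟨h1, h2, h3⟩
      rw [hwYe] at h1 h2
      exact ⟨Finset.mem_union.2 (Or.inr h1), Finset.mem_union.2 (Or.inr h2), h3⟩
    have hsymm : ∀ u v, (u ∈ ρ ∧ v ∈ ρ ∧ (u ⋖ v ∨ v ⋖ u)) →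
        (v ∈ ρ ∧ u ∈ ρ ∧ (v ⋖ u ∨ u ⋖ v)) := by
      rintro u v ⟨h1, h2, h3⟩; exact ⟨h2, h1, h3.symm⟩
    intro p hp q hq
    rcases Finset.mem_union.1 hp with hpX | hpY <;> rcases Finset.mem_union.1 hq with hqX | hqY
    · exact hXpath p hpX q hqX
    · exact ((hXpath p hpX a0 ha0X).trans hbridge).trans (hYpath b0 hb0Y q hqY)
    · exact ((hYpath p hpY b0 hb0Y).trans (rtg_symm hsymm hbridge)).trans
        (hXpath a0 ha0X q hqX)
    · exact hYpath p hpY q hqY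
  have ha0ρ : a0 ∈ ρ := Finset.mem_union.2 (Or.inl ha0X)
  have hb0ρ : b0 ∈ ρ := Finset.mem_union.2 (Or.inr hb0Y)
  have hρcard : 2 ≤ ρ.card := by
    rw [Nat.succ_le_iff]
    exact Finset.one_lt_card.2 ⟨a0, ha0ρ, b0, hb0ρ, fun h => hdisjXY a0 ha0X (h ▸ hb0Y)⟩
  -- a point of σ outside ρ
  obtain ⟨g, hgσ, hgX, hgY⟩ : ∃ g ∈ σ, blkB T σ g ≠ X ∧ blkB T σ g ≠ Y := by
    by_cases hxX : blkB T σ x = X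
    · by_cases hyY : blkB T σ y = Y
      · exact ⟨z, hz, by rw [← hxX]; exact hzx, by rw [← hyY]; exact hzy⟩
      · refine ⟨y, hy, ?_, hyY⟩
        rw [← hxX]; exact hne.symm
    · by_cases hxY : blkB T σ x = Y
      · by_cases hyX : blkB T σ y = X
        · exact ⟨z, hz, by rw [← hyX]; exact hzy, by rw [← hxY]; exact hzx⟩
        · refine ⟨y, hy, hyX, ?_⟩
          rw [← hxY]; exact hne.symm
      · exact ⟨x, hx, hxX, hxY⟩
  have hgρ : g ∉ ρ := by
    intro h
    rcases hblkρ g h with h' | h'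
    · exact hgX h'
    · exact hgY h'
  have hρss : ρ ⊂ σ := Finset.ssubset_iff_of_subset hρsub |>.2 ⟨g, hgσ, hgρ⟩
  have hρproper : IsProperTube ρ := by
    refine ⟨⟨hρconn, hρconv, hρcard⟩, ?_⟩
    have : ρ ⊂ Finset.univ := lt_of_lt_of_le hρss (Finset.subset_univ σ)
    have h2 := Finset.card_lt_card this
    rw [Finset.card_univ] at h2
    omega
  have hρT : ρ ∉ T := by
    intro h
    have h1 : ρ ⊆ blkB T σ a0 := subset_blkB h hρss (ha0ρ)
    rw [hblkX a0 ha0X] at h1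
    exact hdisjXY b0 (h1 hb0ρ) hb0Y
  -- compatibility
  have hcompat : ∀ t ∈ T, t ⊆ ρ ∨ ρ ⊆ t ∨ ∀ u ∈ t, u ∉ ρ := by
    intro t htT
    by_cases htσ : t ⊆ σ
    · by_cases htσ' : t = σ
      · exact Or.inr (Or.inl (htσ' ▸ hρsub))
      · have htss : t ⊂ σ := Finset.ssubset_iff_subset_ne.2 ⟨htσ, htσ'⟩
        have hcard : 0 < t.card := by
          have := (hPT.1 t htT).1.2.2; omega
        obtain ⟨w, hw⟩ := Finset.card_pos.1 hcard
        have hwσ : w ∈ σ := htσ hw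
        have htb : t ⊆ blkB T σ w := subset_blkB htT htss hw
        by_cases hwX : blkB T σ w = X
        · exact Or.inl ((hwX ▸ htb).trans Finset.subset_union_left)
        · by_cases hwY : blkB T σ w = Y
          · exact Or.inl ((hwY ▸ htb).trans Finset.subset_union_right)
          · refine Or.inr (Or.inr ?_)
            intro u hu huρ
            have h1 : blkB T σ u = blkB T σ w := blkB_eq_of_mem hPT hwσ (htb hu)
            rcases hblkρ u huρ with h' | h'
            · exact hwX (h1 ▸ h')
            · exact hwY (h1 ▸ h')
    · rcases Finset.mem_insert.1 hσ with rfl | hσT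
      · exact absurd (Finset.subset_univ t) htσ
      · rcases hPT.2.1 t htT σ hσT with h | h | h
        · exact absurd h htσ
        · exact Or.inr (Or.inl (hρsub.trans h))
        · refine Or.inr (Or.inr ?_)
          intro u hu huρ
          exact h u hu (hρsub huρ)
  -- the new tubing
  have hmemins : ∀ u ∈ insert ρ T, IsProperTube u := by
    intro u hu
    rcases Finset.mem_insert.1 hu with rfl | hu
    · exact hρproper
    · exact hPT.1 u hu
  have hne_mem : ∀ u ∈ insert ρ T, u.Nonempty := by
    intro u hu
    have := (hmemins u hu).1.2.2
    exact Finset.card_pos.1 (by omega)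
  have hpairwise : ∀ s ∈ insert ρ T, ∀ t ∈ insert ρ T,
      s ⊆ t ∨ t ⊆ s ∨ ∀ u ∈ s, u ∉ t := by
    intro s hs t ht
    rcases Finset.mem_insert.1 hs with rfl | hsT <;> rcases Finset.mem_insert.1 ht with rfl | htT
    · exact Or.inl subset_rfl
    · rcases hcompat t htT with h | h | h
      · exact Or.inr (Or.inl h)
      · exact Or.inl h
      · exact Or.inr (Or.inr fun u hu hut => h u hut hu)
    · rcases hcompat s hsT with h | h | h
      · exact Or.inl h
      · exact Or.inr (Or.inl h)
      · exact Or.inr (Or.inr h)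
    · exact hPT.2.1 s hsT t htT
  -- acyclicity of the extended tubing
  set Q := TubingRel (insert ρ T) with hQdef
  have hQirr : ∀ u, ¬ Q u u := by
    intro u h
    obtain ⟨w, hw⟩ := hne_mem u h.1
    exact h.2.2.1 w hw hw
  have hψstep : ∀ u v, Q u v → Relation.ReflTransGen (TubingRel T)
      (if u ⊆ σ then σ else u) (if v ⊆ σ then σ else v) := by
    intro u v h
    have huT' : u ∈ insert ρ T := h.1
    have hvT' : v ∈ insert ρ T := h.2.1
    by_cases huσ : u ⊆ σ <;> by_cases hvσ : v ⊆ σ <;>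
      simp only [if_pos, if_neg, huσ, hvσ, if_true, if_false]
    · exact Relation.ReflTransGen.refl
    · -- u ⊆ σ, ¬ v ⊆ σ
      have hσT : σ ∈ T := by
        rcases Finset.mem_insert.1 hσ with rfl | hσT
        · exact absurd (Finset.subset_univ v) hvσ
        · exact hσT
      have hvT : v ∈ T := by
        rcases Finset.mem_insert.1 hvT' with rfl | h'
        · exact absurd hρsub hvσ
        · exact h'
      refine Relation.ReflTransGen.single ⟨hσT, hvT, ?_, ?_⟩
      · rcases hPT.2.1 σ hσT v hvT with h' | h' | h'
        · obtain ⟨w, hw⟩ := hne_mem u huT'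
          exact absurd (h' (huσ hw)) (h.2.2.1 w hw)
        · exact absurd h' hvσ
        · exact h'
      · obtain ⟨a, ha, b, hb, hab⟩ := h.2.2.2
        exact ⟨a, huσ ha, b, hb, hab⟩
    · -- ¬ u ⊆ σ, v ⊆ σ
      have hσT : σ ∈ T := by
        rcases Finset.mem_insert.1 hσ with rfl | hσT
        · exact absurd (Finset.subset_univ u) huσ
        · exact hσT
      have huT : u ∈ T := by
        rcases Finset.mem_insert.1 huT' with rfl | h'
        · exact absurd hρsub huσ
        · exact h'
      refine Relation.ReflTransGen.single ⟨huT, hσT, ?_, ?_⟩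
      · intro w hwu hwσ
        rcases hPT.2.1 u huT σ hσT with h' | h' | h'
        · exact huσ h'
        · obtain ⟨w', hw'⟩ := hne_mem v hvT'
          exact h.2.2.1 w' (h' (hvσ hw')) hw'
        · exact h' w hwu hwσ
      · obtain ⟨a, ha, b, hb, hab⟩ := h.2.2.2
        exact ⟨a, ha, b, hvσ hb, hab⟩
    · -- neither
      have huT : u ∈ T := by
        rcases Finset.mem_insert.1 huT' with rfl | h'
        · exact absurd hρsub huσ
        · exact h'
      have hvT : v ∈ T := by
        rcases Finset.mem_insert.1 hvT' with rfl | h'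
        · exact absurd hρsub hvσ
        · exact h'
      exact Relation.ReflTransGen.single ⟨huT, hvT, h.2.2.1, h.2.2.2⟩
  have hacycl : ∀ t ∈ insert ρ T, ¬ Relation.TransGen Q t t := by
    intro t0 ht0 hcyc
    obtain ⟨l, hl⟩ := chain_of_transGen hcyc
    have hnodes : ∀ u ∈ t0 :: l, u ∈ insert ρ T := by
      intro u hu
      rcases List.mem_cons.1 hu with rfl | hu
      · exact ht0
      · obtain ⟨c, hc⟩ := chain_mem_target _ _ hl _ (by simp [hu] : u ∈ l ++ [t0])
        exact hc.2.1
    by_cases hA : ∃ u ∈ t0 :: l, ¬ u ⊆ σ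
    · obtain ⟨u, hu, huσ⟩ := hA
      obtain ⟨l', -, hch', -⟩ : ∃ l', l'.length = l.length ∧
          List.Chain Q u (l' ++ [u]) ∧ ∀ w ∈ u :: l', w ∈ t0 :: l := by
        rcases List.mem_cons.1 hu with rfl | hu'
        · exact ⟨l, rfl, hl, fun w hw => hw⟩
        · obtain ⟨l', h1, h2, h3⟩ := rotate_cycle hl hu'
          exact ⟨l', h1, h2, h3⟩
      have huT : u ∈ T := by
        rcases Finset.mem_insert.1 (hnodes u hu) with rfl | h'
        · exact absurd hρsub huσ
        · exact h'
      cases l' with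
      | nil =>
          rw [List.nil_append, chain_singleton'] at hch'
          exact hQirr u hch'
      | cons v m =>
          rw [List.cons_append, chain_cons'] at hch'
          obtain ⟨hQuv, hch2⟩ := hch'
          have hrest := rtg_lift (fun t => if t ⊆ σ then σ else t) hψstep
            (reflTransGen_of_chain _ _ _ hch2)
          simp only [if_neg huσ] at hrest
          have hfirst : TubingRel T u (if v ⊆ σ then σ else v) := by
            have hσT : σ ∈ T := by
              rcases Finset.mem_insert.1 hσ with rfl | hσT
              · exact absurd (Finset.subset_univ u) huσ
              · exact hσT
            by_cases hvσ : v ⊆ σ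
            · rw [if_pos hvσ]
              refine ⟨huT, hσT, ?_, ?_⟩
              · intro w hwu hwσ
                rcases hPT.2.1 u huT σ hσT with h' | h' | h'
                · exact huσ h'
                · obtain ⟨w', hw'⟩ := hne_mem v hQuv.2.1
                  exact hQuv.2.2.1 w' (h' (hvσ hw')) hw'
                · exact h' w hwu hwσ
              · obtain ⟨a, ha, b, hb, hab⟩ := hQuv.2.2.2
                exact ⟨a, ha, b, hvσ hb, hab⟩
            · rw [if_neg hvσ]
              have hvT : v ∈ T := by
                rcases Finset.mem_insert.1 hQuv.2.1 with rfl | h'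
                · exact absurd hρsub hvσ
                · exact h'
              exact ⟨huT, hvT, hQuv.2.2.1, hQuv.2.2.2⟩
          exact hPT.2.2 u huT (Relation.TransGen.head' hfirst hrest)
    · push_neg at hA
      by_cases hρin : ρ ∈ t0 :: l
      · -- rotate to ρ
        obtain ⟨l', -, hch', hmem'⟩ : ∃ l', l'.length = l.length ∧
            List.Chain Q ρ (l' ++ [ρ]) ∧ ∀ w ∈ ρ :: l', w ∈ t0 :: l := by
          rcases List.mem_cons.1 hρin with rfl | hu'
          · exact ⟨l, rfl, hl, fun w hw => hw⟩
          · obtain ⟨l', h1, h2, h3⟩ := rotate_cycle hl hu'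
            exact ⟨l', h1, h2, h3⟩
        cases l' with
        | nil =>
            rw [List.nil_append, chain_singleton'] at hch'
            exact hQirr ρ hch'
        | cons v1 m =>
            rw [List.cons_append, chain_cons'] at hch'
            obtain ⟨hQρv, hch2⟩ := hch'
            -- facts about steps into ρ
            have FIN : ∀ v E : Finset α, Q v ρ → v ⊆ σ → (∀ a ∈ v, blkB T σ a = E) →
                ∃ W, (W = X ∨ W = Y) ∧ Relation.ReflTransGen (RB T σ) E W := by
              intro v E hQvρ hvσ hE
              obtain ⟨a, ha, b, hb, hab⟩ := hQvρ.2.2.2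
              refine ⟨blkB T σ b, hblkρ b hb, ?_⟩
              rcases eq_or_ne E (blkB T σ b) with he | hne'
              · rw [he]
              · refine Relation.ReflTransGen.single
                  ⟨⟨a, hvσ ha, hE a ha⟩, ⟨b, hρsub hb, rfl⟩, hne', a, ?_, b, mem_blkB b, hab⟩
                rw [← hE a ha]; exact mem_blkB a
            have SEG : ∀ (m : List (Finset α)) (v E : Finset α),
                List.Chain Q v (m ++ [ρ]) → (∀ u ∈ v :: m, u ⊆ σ) → v ∈ T → v ⊂ σ →
                (∀ a ∈ v, blkB T σ a = E) →
                ∃ W, (W = X ∨ W = Y) ∧ Relation.ReflTransGen (RB T σ) E W := by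
              intro m
              induction m with
              | nil =>
                  intro v E hch hsub hvT hvss hE
                  rw [List.nil_append, chain_singleton'] at hch
                  exact FIN v E hch (hsub v (by simp)) hE
              | cons w m' ih =>
                  intro v E hch hsub hvT hvss hE
                  rw [List.cons_append, chain_cons'] at hch
                  obtain ⟨hQvw, hch2⟩ := hch
                  by_cases hwρ : w = ρ
                  · subst hwρ
                    exact FIN v E hQvw (hsub v (by simp)) hE
                  · have hwσ : w ⊆ σ := hsub w (by simp)
                    have hwT : w ∈ T := by
                      rcases Finset.mem_insert.1 hQvw.2.1 with rfl | h'
                      · exact absurd rfl hwρ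
                      · exact h'
                    have hwss : w ⊂ σ := by
                      refine Finset.ssubset_iff_subset_ne.2 ⟨hwσ, ?_⟩
                      intro heq
                      obtain ⟨w', hw'⟩ := hne_mem v hQvw.1
                      exact hQvw.2.2.1 w' hw' (by rw [heq]; exact hsub v (by simp) hw')
                    obtain ⟨a, ha, b, hb, hab⟩ := hQvw.2.2.2
                    have hbσ : b ∈ σ := hwσ hb
                    have hEw : ∀ a' ∈ w, blkB T σ a' = blkB T σ b := by
                      intro a' ha'
                      have h1 : w ⊆ blkB T σ b := subset_blkB hwT hwss hb
                      exact blkB_eq_of_mem hPT hbσ (h1 ha')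
                    have hstep : Relation.ReflTransGen (RB T σ) E (blkB T σ b) := by
                      rcases eq_or_ne E (blkB T σ b) with he | hne'
                      · rw [he]
                      · refine Relation.ReflTransGen.single
                          ⟨⟨a, (hsub v (by simp)) ha, hE a ha⟩, ⟨b, hbσ, rfl⟩,
                            hne', a, ?_, b, mem_blkB b, hab⟩
                        rw [← hE a ha]; exact mem_blkB a
                    obtain ⟨W, hW, hrtg⟩ := ih w (blkB T σ b) hch2
                      (fun u hu => hsub u (by simp only [List.mem_cons] at hu ⊢; tauto))
                      hwT hwss hEw
                    exact ⟨W, hW, hstep.trans hrtg⟩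
            -- set up the segment from ρ
            have hv1sub : v1 ⊆ σ := hA v1 (hmem' v1 (by simp))
            have hv1T : v1 ∈ T := by
              rcases Finset.mem_insert.1 hQρv.2.1 with rfl | h'
              · obtain ⟨w', hw'⟩ := hne_mem ρ hQρv.1
                exact absurd hw' (hQρv.2.2.1 w' hw')
              · exact h'
            have hv1ss : v1 ⊂ σ := by
              refine Finset.ssubset_iff_subset_ne.2 ⟨hv1sub, ?_⟩
              intro heq
              exact hQρv.2.2.1 a0 ha0ρ (by rw [heq]; exact hρsub ha0ρ)
            obtain ⟨a1, ha1ρ, b1, hb1v, hab1⟩ := hQρv.2.2.2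
            have hb1σ : b1 ∈ σ := hv1sub hb1v
            have hE1 : ∀ a' ∈ v1, blkB T σ a' = blkB T σ b1 := by
              intro a' ha'
              have h1 : v1 ⊆ blkB T σ b1 := subset_blkB hv1T hv1ss hb1v
              exact blkB_eq_of_mem hPT hb1σ (h1 ha')
            have hE1X : blkB T σ b1 ≠ X := by
              intro h
              have h1 : v1 ⊆ ρ := by
                have := subset_blkB hv1T hv1ss hb1v
                rw [h] at this
                exact this.trans Finset.subset_union_left
              exact hQρv.2.2.1 b1 (h1 hb1v) hb1v
            have hE1Y : blkB T σ b1 ≠ Y := by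
              intro h
              have h1 : v1 ⊆ ρ := by
                have := subset_blkB hv1T hv1ss hb1v
                rw [h] at this
                exact this.trans Finset.subset_union_right
              exact hQρv.2.2.1 b1 (h1 hb1v) hb1v
            have hXE1 : Relation.ReflTransGen (RB T σ) X (blkB T σ b1) := by
              have ha1blk := hblkρ a1 ha1ρ
              have hstep : RB T σ (blkB T σ a1) (blkB T σ b1) := by
                refine ⟨⟨a1, hρsub ha1ρ, rfl⟩, ⟨b1, hb1σ, rfl⟩, ?_,
                  a1, mem_blkB a1, b1, mem_blkB b1, hab1⟩
                intro h
                rcases ha1blk with h' | h'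
                · exact hE1X (by rw [← h, h'])
                · exact hE1Y (by rw [← h, h'])
              exact (hXq _ ha1blk).tail hstep
            have hmm : ∀ u ∈ v1 :: m, u ⊆ σ := by
              intro u hu
              refine hA u (hmem' u ?_)
              simp only [List.mem_cons] at hu ⊢; tauto
            obtain ⟨W, hW, hrtg⟩ := SEG m v1 (blkB T σ b1) hch2 hmm hv1T hv1ss hE1
            have hE1Y' : Relation.ReflTransGen (RB T σ) (blkB T σ b1) Y :=
              hrtg.trans (hqY W hW)
            rcases hcov (blkB T σ b1) ⟨b1, hb1σ, rfl⟩ hXE1 hE1Y' with h | h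
            · exact hE1X h
            · exact hE1Y h
      · -- cycle entirely in T
        have hallT : ∀ u ∈ t0 :: l, u ∈ T := by
          intro u hu
          rcases Finset.mem_insert.1 (hnodes u hu) with rfl | h'
          · exact absurd hu hρin
          · exact h'
        have hchain' : List.Chain (TubingRel T) t0 (l ++ [t0]) := by
          apply chain_imp_mem _ _ hl
          intro u v hu hv h
          have hu' : u ∈ t0 :: l := by
            simp only [List.mem_cons, List.mem_append, List.mem_singleton] at hu ⊢; tauto
          have hv' : v ∈ t0 :: l := by
            simp only [List.mem_cons, List.mem_append, List.mem_singleton] at hv ⊢; tauto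
          exact ⟨hallT u hu', hallT v hv', h.2.2.1, h.2.2.2⟩
        exact hPT.2.2 t0 (hallT t0 (by simp)) (transGen_of_chain _ _ _ hchain')
  -- contradiction with maximality
  have htub : IsProperTubing (insert ρ T) := ⟨hmemins, hpairwise, hacycl⟩
  have heq := hT.2 _ htub (Finset.subset_insert ρ T)
  exact hρT (by rw [heq]; exact Finset.mem_insert_self ρ T)

end TwoBlocks


/-- for a maximal tubing `T` and a proper tube `τ ∉ T` with
`σ = conv_T(τ)` the minimal tube of `T ∪ {P}` containing `τ`, `T` partitions `σ`
into a lower set `A` and an upper set `B` (each a tube of `T` or a singleton),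
both meeting `τ`. -/
theorem partition_lemma {α : Type*} [Fintype α] [PartialOrder α] [DecidableEq α]
    (hconn : IsConnectedIn (Finset.univ : Finset α)) (hn : 2 ≤ Fintype.card α)
    (T : Finset (Finset α)) (hT : IsMaximalTubing T)
    (τ : Finset α) (hτ : IsProperTube τ) (hτT : τ ∉ T)
    (σ : Finset α) (hσ : σ ∈ insert Finset.univ T) (hτσ : τ ⊆ σ)
    (hmin : ∀ σ' ∈ insert Finset.univ T, τ ⊆ σ' → σ ⊆ σ') :
    ∃ A B : Finset α, A ∪ B = σ ∧ Disjoint A B ∧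
      (∀ b ∈ A, ∀ a ∈ σ, a ≤ b → a ∈ A) ∧
      (∀ a ∈ B, ∀ b ∈ σ, a ≤ b → b ∈ B) ∧
      (A ∈ T ∨ A.card = 1) ∧ (B ∈ T ∨ B.card = 1) ∧
      (A ∩ τ).Nonempty ∧ (B ∩ τ).Nonempty := by
  classical
  have hPT : IsProperTubing T := hT.1
  have hτcard : 2 ≤ τ.card := hτ.1.2.2
  obtain ⟨x, hxτ⟩ := Finset.card_pos.1 (by omega : 0 < τ.card)
  have hxσ : x ∈ σ := hτσ hxτ
  have hτnotsub : ¬ τ ⊆ blkB T σ x := by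
    intro h
    rcases blkB_cases (σ := σ) hPT x with h1 | ⟨h1, h2⟩
    · rw [h1] at h
      have := Finset.card_le_card h
      simp at this
      omega
    · have h3 := hmin (blkB T σ x) (Finset.mem_insert_of_mem h1) h
      exact absurd (le_antisymm h2.subset h3) (ne_of_lt h2)
  obtain ⟨y, hyτ, hynb⟩ : ∃ y ∈ τ, y ∉ blkB T σ x := by
    by_contra h
    push_neg at h
    exact hτnotsub h
  have hyσ : y ∈ σ := hτσ hyτ
  have hne : blkB T σ x ≠ blkB T σ y := by
    intro h
    exact hynb (h ▸ mem_blkB y)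
  have htwo := two_blocks hconn hT hσ hxσ hyσ hne
  set A := blkB T σ x with hAdef
  set B := blkB T σ y with hBdef
  have hAσ : A ⊆ σ := blkB_subset hxσ
  have hBσ : B ⊆ σ := blkB_subset hyσ
  have hmemAB : ∀ z ∈ σ, z ∈ A ∨ z ∈ B := by
    intro z hz
    rcases htwo z hz with h | h
    · exact Or.inl (h ▸ mem_blkB z)
    · exact Or.inr (h ▸ mem_blkB z)
  have hunion : A ∪ B = σ := by
    apply Finset.Subset.antisymm (Finset.union_subset hAσ hBσ)
    intro u hu
    exact Finset.mem_union.2 (hmemAB u hu)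
  have hdisj : Disjoint A B := by
    rw [Finset.disjoint_left]
    intro u huA huB
    exact hne (blkB_eq_blkB hPT hxσ hyσ huA huB)
  have hAT : A ∈ T ∨ A.card = 1 := by
    rcases blkB_cases (σ := σ) hPT x with h | ⟨h, -⟩
    · rw [← hAdef] at h
      exact Or.inr (by rw [h]; exact Finset.card_singleton x)
    · rw [← hAdef] at h
      exact Or.inl h
  have hBT : B ∈ T ∨ B.card = 1 := by
    rcases blkB_cases (σ := σ) hPT y with h | ⟨h, -⟩
    · rw [← hBdef] at h
      exact Or.inr (by rw [h]; exact Finset.card_singleton y)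
    · rw [← hBdef] at h
      exact Or.inl h
  have hnotboth : ¬ ((∃ a ∈ A, ∃ b ∈ B, a < b) ∧ (∃ a ∈ B, ∃ b ∈ A, a < b)) := by
    rintro ⟨⟨a, ha, b, hb, hab⟩, ⟨c, hc, d, hd, hcd⟩⟩
    rcases blkB_cases (σ := σ) hPT x with h1 | ⟨h1, -⟩
    · rw [← hAdef] at h1
      have hax : a = x := by rw [h1] at ha; exact Finset.mem_singleton.1 ha
      have hdx : d = x := by rw [h1] at hd; exact Finset.mem_singleton.1 hd
      have hxb : x < b := by rw [← hax]; exact hab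
      have hcx : c < x := by rw [← hdx]; exact hcd
      have hxB : x ∈ B := blkB_convex hPT y c hc b hb x hcx.le hxb.le
      exact hne (blkB_eq_of_mem hPT hyσ hxB)
    · rw [← hAdef] at h1
      rcases blkB_cases (σ := σ) hPT y with h2 | ⟨h2, -⟩
      · rw [← hBdef] at h2
        have hby : b = y := by rw [h2] at hb; exact Finset.mem_singleton.1 hb
        have hcy : c = y := by rw [h2] at hc; exact Finset.mem_singleton.1 hc
        have hay : a < y := by rw [← hby]; exact hab
        have hyd : y < d := by rw [← hcy]; exact hcd
        have hyA : y ∈ A := blkB_convex hPT x a ha d hd y hay.le hyd.le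
        exact hne (blkB_eq_of_mem hPT hxσ hyA).symm
      · rw [← hBdef] at h2
        have hTAB : TubingRel T A B :=
          ⟨h1, h2, fun u hu hu' => Finset.disjoint_left.1 hdisj hu hu', a, ha, b, hb, hab⟩
        have hTBA : TubingRel T B A :=
          ⟨h2, h1, fun u hu hu' => Finset.disjoint_left.1 hdisj hu' hu, c, hc, d, hd, hcd⟩
        exact hPT.2.2 A h1 (Relation.TransGen.head hTAB (Relation.TransGen.single hTBA))
  have build : ∀ (L U : Finset α) (p q : α), p ∈ τ → q ∈ τ → p ∈ L → q ∈ U →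
      L ∪ U = σ → Disjoint L U → (∀ z ∈ σ, z ∈ L ∨ z ∈ U) →
      (¬ ∃ a ∈ U, ∃ b ∈ L, a < b) → (L ∈ T ∨ L.card = 1) → (U ∈ T ∨ U.card = 1) →
      ∃ A B : Finset α, A ∪ B = σ ∧ Disjoint A B ∧
        (∀ b ∈ A, ∀ a ∈ σ, a ≤ b → a ∈ A) ∧
        (∀ a ∈ B, ∀ b ∈ σ, a ≤ b → b ∈ B) ∧
        (A ∈ T ∨ A.card = 1) ∧ (B ∈ T ∨ B.card = 1) ∧
        (A ∩ τ).Nonempty ∧ (B ∩ τ).Nonempty := by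
    intro L U p q hpτ hqτ hpL hqU hun hdj hmem hup hLT hUT
    refine ⟨L, U, hun, hdj, ?_, ?_, hLT, hUT,
      ⟨p, Finset.mem_inter.2 ⟨hpL, hpτ⟩⟩, ⟨q, Finset.mem_inter.2 ⟨hqU, hqτ⟩⟩⟩
    · intro b hb a ha hab
      rcases hmem a ha with h | h
      · exact h
      · exfalso
        rcases eq_or_lt_of_le hab with rfl | hlt
        · exact Finset.disjoint_left.1 hdj hb h
        · exact hup ⟨a, h, b, hb, hlt⟩
    · intro a ha b hb hab
      rcases hmem b hb with h | h
      · exfalso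
        rcases eq_or_lt_of_le hab with rfl | hlt
        · exact Finset.disjoint_left.1 hdj h ha
        · exact hup ⟨a, ha, b, h, hlt⟩
      · exact h
  rcases Classical.em (∃ a ∈ B, ∃ b ∈ A, a < b) with hBA | hBA
  · exact build B A y x hyτ hxτ (mem_blkB y) (mem_blkB x)
      (by rw [Finset.union_comm]; exact hunion) hdisj.symm
      (fun z hz => (hmemAB z hz).symm) (fun h => hnotboth ⟨h, hBA⟩) hBT hAT
  · exact build A B x y hxτ hyτ (mem_blkB x) (mem_blkB y) hunion hdisj
      hmemAB hBA hAT hBT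
end
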